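/- arXiv:2311.06974 — 3 statements merged into one kernel-verified Lean document; each statement's English description precedes it below -/
import Mathlib

section
/- Let n ≥ 3 and let R ⊆ {2,…,n−1} with n−1 ∈ R. If S is a Hamilton sequence for the restricted rotator graph RR_{n−1}(R) whose last two entries both equal n−1, then for every m ∈ {2,3,…,n}, the sequence rewind_m(S) is a Hamilton sequence for the restricted incomplete rotator graph RIR_n(R ∪ {n}, m). -/
open Equiv

/-- The prefix-rotation `σ_r = (1 2 ⋯ r)` of positions, 0-indexed as a
permutation of `Fin n` (it sends position `i` to `i+1` for `i < r-1`,
sends position `r-1` to `0`, and fixes all positions `≥ r`). -/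
def sigmaRot (n r : ℕ) : Equiv.Perm (Fin n) :=
  if h : r - 1 < n then Fin.cycleRange ⟨r - 1, h⟩ else 1

/-- The permutation `σ_{r₁}σ_{r₂}⋯σ_{r_i}` (composed left-to-right) given by the
first `i` entries of the sequence `S`. -/
def partialProd (n : ℕ) (S : List ℕ) (i : ℕ) : Equiv.Perm (Fin n) :=
  ((S.take i).map (sigmaRot n)).prod

/-- `S` is a Hamilton sequence for the restricted rotator graph `RR_n(R)`. -/
def IsHamiltonSeq (n : ℕ) (R : Set ℕ) (S : List ℕ) : Prop :=
  S.length = Nat.factorial n ∧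
  (∀ r ∈ S, r ∈ R) ∧
  (∀ i < Nat.factorial n, ∀ j < Nat.factorial n,
      partialProd n S i = partialProd n S j → i = j) ∧
  partialProd n S S.length = 1

/-- The value (0-indexed symbol) at the last position of the string `a`;
the one-line-notation symbol there is `lastVal a + 1`. -/
def lastVal {n : ℕ} (a : Equiv.Perm (Fin n)) : ℕ :=
  if h : 0 < n then ((a ⟨n - 1, Nat.sub_lt h Nat.one_pos⟩ : Fin n) : ℕ) else 0

/-- Arc relation of the restricted incomplete rotator graph `RIR_n(R,m)`:
both endpoints have last symbol `≤ m` and `b = a·σ_r` for some `r ∈ R`. -/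
def RIRAdj (n m : ℕ) (R : Set ℕ) (a b : Equiv.Perm (Fin n)) : Prop :=
  lastVal a < m ∧ lastVal b < m ∧ ∃ r ∈ R, b = a * sigmaRot n r

/-- `RIR_n(R,m)` is strongly connected. -/
def StronglyConnectedRIR (n m : ℕ) (R : Set ℕ) : Prop :=
  ∀ a b : Equiv.Perm (Fin n), lastVal a < m → lastVal b < m →
    Relation.ReflTransGen (RIRAdj n m R) a b

/-- The reuse operation: replace each entry `r` by `n,…,n,n+1-r` (`n-1` copies of `n`). -/
def reuseOp (n : ℕ) (S : List ℕ) : List ℕ :=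
  (S.map (fun r => List.replicate (n - 1) n ++ [n + 1 - r])).flatten

/-- Corbett's reuse sequences: `C₁ = (1)` and `C_k = reuse_k(C_{k-1})`. -/
def corbettC : ℕ → List ℕ
  | 0 => []
  | 1 => [1]
  | k + 2 => reuseOp (k + 2) (corbettC (k + 1))

/-- The recycle operation: replace each entry `r` by
`n, n, n-1, …, n-1, n, …, n` (`r-1` copies of `n-1`, then `n-r-1` copies of `n`). -/
def recycleOp (n : ℕ) (S : List ℕ) : List ℕ :=
  (S.map (fun r => n :: n :: (List.replicate (r - 1) (n - 1) ++ List.replicate (n - r - 1) n))).flatten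

/-- The canonical recycle sequences: `D₁ = (1)` and `D_k = recycle_k(D_{k-1})`. -/
def recycleD : ℕ → List ℕ
  | 0 => []
  | 1 => [1]
  | k + 2 => recycleOp (k + 2) (recycleD (k + 1))

/-- The rewind operation `rewind_m(S)` (with `S = T, n-1, n-1`):
`(T,n-1,n)`, then `m-2` copies of `(T,n)`, then `(T,n-1,n)`, then `m-2` copies of `n`. -/
def rewindOp (n m : ℕ) (S : List ℕ) : List ℕ :=
  (S.dropLast.dropLast ++ [n - 1, n])
    ++ (List.replicate (m - 2) (S.dropLast.dropLast ++ [n])).flatten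
    ++ (S.dropLast.dropLast ++ [n - 1, n])
    ++ List.replicate (m - 2) n

/-- The canonical rewind sequences: `W₂ = (2,2)` and `W_k = rewind_k(W_{k-1})`. -/
def rewindW : ℕ → List ℕ
  | 0 => []
  | 1 => []
  | 2 => [2, 2]
  | k + 3 => rewindOp (k + 3) (k + 3) (rewindW (k + 2))

/-- `S` is a Hamilton sequence for the restricted incomplete rotator graph `RIR_n(R,m)`,
starting from the string `n n-1 ⋯ 1` (which is `Fin.revPerm`). -/
def IsHamiltonSeqRIR (n m : ℕ) (R : Set ℕ) (S : List ℕ) : Prop :=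
  S.length = m * Nat.factorial (n - 1) ∧
  (∀ r ∈ S, r ∈ R) ∧
  (∀ i < S.length, ∀ j < S.length,
      Fin.revPerm * partialProd n S i = Fin.revPerm * partialProd n S j → i = j) ∧
  {b : Equiv.Perm (Fin n) | ∃ i < S.length, b = Fin.revPerm * partialProd n S i}
    = {b : Equiv.Perm (Fin n) | lastVal b < m} ∧
  Fin.revPerm * partialProd n S S.length = Fin.revPerm

/-- The cyclic shift `shift²` moving the first two entries to the end. -/
def shift2 (S : List ℕ) : List ℕ := S.drop 2 ++ S.take 2

namespace St14

@[simp] lemma pp_zero (n : ℕ) (U : List ℕ) : partialProd n U 0 = 1 := by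
  simp [partialProd]

lemma pp_prefix (n : ℕ) (A B : List ℕ) {i : ℕ} (h : i ≤ A.length) :
    partialProd n (A ++ B) i = partialProd n A i := by
  simp [partialProd, List.take_append_of_le_length h]

lemma pp_shift (n : ℕ) (A B : List ℕ) (i : ℕ) :
    partialProd n (A ++ B) (A.length + i)
      = partialProd n A A.length * partialProd n B i := by
  simp [partialProd, List.take_append, List.take_length, List.take_of_length_le]

lemma pp_succ (n : ℕ) (A : List ℕ) (r : ℕ) (i : ℕ) (h : i ≤ A.length) :
    partialProd n (A ++ [r]) (i + (A.length - i) + 1)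
      = partialProd n A A.length * sigmaRot n r := by
  have : i + (A.length - i) = A.length := by omega
  rw [this]
  have := pp_shift n A [r] 1
  simpa [partialProd] using this

lemma pp_flatten_replicate (n : ℕ) (B : List ℕ) {k j i : ℕ} (hj : j < k)
    (hi : i ≤ B.length) :
    partialProd n ((List.replicate k B).flatten) (j * B.length + i)
      = (partialProd n B B.length) ^ j * partialProd n B i := by
  induction j generalizing k with
  | zero =>
      obtain ⟨k', rfl⟩ : ∃ k', k = k' + 1 := ⟨k - 1, by omega⟩
      rw [List.replicate_succ, List.flatten_cons]
      simp [pp_prefix n B _ hi]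
  | succ j ih =>
      obtain ⟨k', rfl⟩ : ∃ k', k = k' + 1 := ⟨k - 1, by omega⟩
      rw [List.replicate_succ, List.flatten_cons]
      have harith : (j+1) * B.length + i = B.length + (j * B.length + i) := by ring
      rw [harith, pp_shift, ih (by omega), pow_succ]
      group

lemma pp_replicate (n : ℕ) (r : ℕ) {k i : ℕ} (hi : i ≤ k) :
    partialProd n (List.replicate k r) i = (sigmaRot n r) ^ i := by
  simp [partialProd, List.take_replicate, Nat.min_eq_left hi]

end St14

namespace St14
variable {N : ℕ}

/-- Embed `Perm (Fin N)` into `Perm (Fin (N+1))` fixing the last point. -/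
def emb (e : Perm (Fin N)) : Perm (Fin (N + 1)) where
  toFun x := if h : (x : ℕ) < N then ⟨e ⟨x, h⟩, (e ⟨x, h⟩).2.trans (Nat.lt_succ_self N)⟩ else x
  invFun x := if h : (x : ℕ) < N then ⟨e⁻¹ ⟨x, h⟩, (e⁻¹ ⟨x, h⟩).2.trans (Nat.lt_succ_self N)⟩ else x
  left_inv x := by
    by_cases h : (x : ℕ) < N
    · simp only [dif_pos h, Fin.eta, (e ⟨x, h⟩).2, dif_pos]
      simp [Fin.ext_iff]
    · simp [dif_neg h]
  right_inv x := by
    by_cases h : (x : ℕ) < N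
    · simp only [dif_pos h, Fin.eta, (e⁻¹ ⟨x, h⟩).2, dif_pos]
      simp [Fin.ext_iff]
    · simp [dif_neg h]

lemma emb_apply_lt (e : Perm (Fin N)) (x : Fin (N + 1)) (h : (x : ℕ) < N) :
    emb e x = ⟨e ⟨x, h⟩, (e ⟨x, h⟩).2.trans (Nat.lt_succ_self N)⟩ := dif_pos h

lemma emb_apply_last (e : Perm (Fin N)) (x : Fin (N + 1)) (h : ¬ (x : ℕ) < N) :
    emb e x = x := dif_neg h

@[simp] lemma emb_one : emb (1 : Perm (Fin N)) = 1 := by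
  ext x
  by_cases h : (x : ℕ) < N
  · simp [emb_apply_lt _ x h]
  · simp [emb_apply_last _ x h]

lemma emb_mul (a b : Perm (Fin N)) : emb (a * b) = emb a * emb b := by
  ext x
  by_cases h : (x : ℕ) < N
  · rw [Perm.mul_apply, emb_apply_lt b x h, emb_apply_lt (a*b) x h,
      emb_apply_lt a _ (b ⟨x, h⟩).2]
    simp
  · rw [Perm.mul_apply, emb_apply_last b x h, emb_apply_last (a*b) x h,
      emb_apply_last a x h]

lemma emb_inj {a b : Perm (Fin N)} (h : emb a = emb b) : a = b := by
  ext i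
  have := congrArg (fun p : Perm (Fin (N+1)) => p ⟨i, i.2.trans (Nat.lt_succ_self N)⟩) h
  simp only [emb_apply_lt _ _ (show ((⟨(i:ℕ), _⟩ : Fin (N+1)) : ℕ) < N from i.2)] at this
  simpa [Fin.ext_iff] using this

lemma emb_sigmaRot {r : ℕ} (hr : r ≤ N) (hN : 0 < N) :
    emb (sigmaRot N r) = sigmaRot (N + 1) r := by
  obtain ⟨M, rfl⟩ : ∃ M, N = M + 1 := ⟨N - 1, by omega⟩
  have h1 : r - 1 < M + 1 := by omega
  have h2 : r - 1 < M + 1 + 1 := by omega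
  rw [sigmaRot, sigmaRot, dif_pos h1, dif_pos h2]
  ext x
  rcases lt_trichotomy (x : ℕ) (r - 1) with hx | hx | hx
  · have hxN : (x : ℕ) < M + 1 := by omega
    have hR : ((Fin.cycleRange ⟨r-1, h2⟩ x : Fin (M+2)) : ℕ) = (x : ℕ) + 1 :=
      Fin.coe_cycleRange_of_lt (show x < ⟨r-1, h2⟩ from hx)
    have hL : ((Fin.cycleRange ⟨r-1, h1⟩ ⟨x, hxN⟩ : Fin (M+1)) : ℕ) = (x : ℕ) + 1 :=
      Fin.coe_cycleRange_of_lt (show (⟨(x:ℕ), hxN⟩ : Fin (M+1)) < ⟨r-1, h1⟩ from hx)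
    rw [emb_apply_lt _ x hxN]
    simp only [Fin.ext_iff, hR, hL]
  · have hxN : (x : ℕ) < M + 1 := by omega
    have hR : (Fin.cycleRange ⟨r-1, h2⟩ x : Fin (M+2)) = 0 :=
      Fin.cycleRange_of_eq (by simp [Fin.ext_iff]; omega)
    have hL : (Fin.cycleRange ⟨r-1, h1⟩ ⟨x, hxN⟩ : Fin (M+1)) = 0 :=
      Fin.cycleRange_of_eq (by simp [Fin.ext_iff]; omega)
    rw [emb_apply_lt _ x hxN]
    simp only [Fin.ext_iff, hR, hL]
    simp
  · have hR : (Fin.cycleRange ⟨r-1, h2⟩ x : Fin (M+2)) = x :=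
      Fin.cycleRange_of_gt (show (⟨r-1, h2⟩ : Fin (M+2)) < x from hx)
    rw [hR]
    by_cases hxN : (x : ℕ) < M + 1
    · have hL : (Fin.cycleRange ⟨r-1, h1⟩ ⟨x, hxN⟩ : Fin (M+1)) = ⟨x, hxN⟩ :=
        Fin.cycleRange_of_gt (show (⟨r-1, h1⟩ : Fin (M+1)) < ⟨(x:ℕ), hxN⟩ from hx)
      rw [emb_apply_lt _ x hxN]
      simp [hL]
    · rw [emb_apply_last _ x hxN]

lemma emb_pp (U : List ℕ) (hU : ∀ r ∈ U, r ≤ N) (hN : 0 < N) (i : ℕ) :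
    partialProd (N + 1) U i = emb (partialProd N U i) := by
  induction U generalizing i with
  | nil => simp [partialProd]
  | cons a l ih =>
      cases i with
      | zero => simp [partialProd]
      | succ i =>
          have ha : a ≤ N := hU a (by simp)
          have hl : ∀ r ∈ l, r ≤ N := fun r hr => hU r (by simp [hr])
          simp only [partialProd, List.take_succ_cons, List.map_cons, List.prod_cons]
          rw [← partialProd, ← partialProd, ih hl, emb_mul, emb_sigmaRot ha hN]

/-- Inverse of `emb` on permutations fixing the last point. -/
def unemb (b : Perm (Fin (N + 1))) (hb : b ⟨N, Nat.lt_succ_self N⟩ = ⟨N, Nat.lt_succ_self N⟩) :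
    Perm (Fin N) where
  toFun i := ⟨b ⟨i, i.2.trans (Nat.lt_succ_self N)⟩, by
    have hne : b ⟨i, i.2.trans (Nat.lt_succ_self N)⟩ ≠ ⟨N, Nat.lt_succ_self N⟩ := by
      intro h
      have := b.injective (h.trans hb.symm)
      simp [Fin.ext_iff] at this
      omega
    have := (b ⟨i, i.2.trans (Nat.lt_succ_self N)⟩).2
    simp [Fin.ext_iff] at hne
    omega⟩
  invFun i := ⟨b⁻¹ ⟨i, i.2.trans (Nat.lt_succ_self N)⟩, by
    have hb' : b⁻¹ ⟨N, Nat.lt_succ_self N⟩ = ⟨N, Nat.lt_succ_self N⟩ := by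
      rw [Perm.inv_eq_iff_eq, hb]
    have hne : b⁻¹ ⟨i, i.2.trans (Nat.lt_succ_self N)⟩ ≠ ⟨N, Nat.lt_succ_self N⟩ := by
      intro h
      have := b⁻¹.injective (h.trans hb'.symm)
      simp [Fin.ext_iff] at this
      omega
    have := (b⁻¹ ⟨i, i.2.trans (Nat.lt_succ_self N)⟩).2
    simp [Fin.ext_iff] at hne
    simp only [Perm.inv_def] at this hne ⊢
    omega⟩
  left_inv i := by simp [Fin.ext_iff]
  right_inv i := by simp [Fin.ext_iff]

lemma emb_unemb (b : Perm (Fin (N + 1)))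
    (hb : b ⟨N, Nat.lt_succ_self N⟩ = ⟨N, Nat.lt_succ_self N⟩) : emb (unemb b hb) = b := by
  ext x
  by_cases h : (x : ℕ) < N
  · rw [emb_apply_lt _ x h]
    simp [unemb]
  · rw [emb_apply_last _ x h]
    have hx : x = ⟨N, Nat.lt_succ_self N⟩ := by
      have := x.2; simp [Fin.ext_iff]; omega
    rw [hx, hb]


section CVals
variable {N : ℕ}

/-- notation shortcuts -/
def lastF (N : ℕ) : Fin (N + 1) := ⟨N, Nat.lt_succ_self N⟩

lemma c_def (hN : 1 ≤ N) : sigmaRot (N + 1) N = Fin.cycleRange ⟨N - 1, by omega⟩ := by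
  rw [sigmaRot, dif_pos]

lemma s_def : sigmaRot (N + 1) (N + 1) = Fin.cycleRange (lastF N) := by
  rw [sigmaRot, dif_pos (by omega : N + 1 - 1 < N + 1)]
  congr 1

lemma s_apply_lt (x : Fin (N + 1)) (h : (x : ℕ) < N) :
    (sigmaRot (N + 1) (N + 1) x : ℕ) = (x : ℕ) + 1 := by
  rw [s_def]
  exact Fin.coe_cycleRange_of_lt (show x < lastF N from h)

lemma s_apply_last : sigmaRot (N + 1) (N + 1) (lastF N) = ⟨0, by omega⟩ := by
  rw [s_def]
  have := Fin.cycleRange_self (lastF N)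
  rw [this]
  rfl

lemma c_apply_lt (hN : 1 ≤ N) (x : Fin (N + 1)) (h : (x : ℕ) < N - 1) :
    (sigmaRot (N + 1) N x : ℕ) = (x : ℕ) + 1 := by
  rw [c_def hN]
  exact Fin.coe_cycleRange_of_lt (show x < (⟨N-1, by omega⟩ : Fin (N+1)) from h)

lemma c_apply_top (hN : 1 ≤ N) : sigmaRot (N + 1) N ⟨N - 1, by omega⟩ = ⟨0, by omega⟩ := by
  rw [c_def hN]
  have := Fin.cycleRange_self (⟨N - 1, by omega⟩ : Fin (N + 1))
  rw [this]
  rfl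

lemma c_apply_last (hN : 1 ≤ N) : sigmaRot (N + 1) N (lastF N) = lastF N := by
  rw [c_def hN]
  exact Fin.cycleRange_of_gt (show (⟨N-1, by omega⟩ : Fin (N+1)) < lastF N by
    simp [Fin.lt_iff_val_lt_val, lastF]; omega)

lemma cinv_apply (hN : 1 ≤ N) (v : ℕ) (h1 : 1 ≤ v) (h2 : v ≤ N - 1) :
    (sigmaRot (N + 1) N)⁻¹ ⟨v, by omega⟩ = ⟨v - 1, by omega⟩ := by
  rw [Equiv.Perm.inv_eq_iff_eq]
  have := c_apply_lt hN (⟨v - 1, by omega⟩ : Fin (N + 1)) (by simp; omega)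
  simp [Fin.ext_iff] at this ⊢
  omega

lemma cinv_zero (hN : 1 ≤ N) :
    (sigmaRot (N + 1) N)⁻¹ ⟨0, by omega⟩ = ⟨N - 1, by omega⟩ := by
  rw [Equiv.Perm.inv_eq_iff_eq, c_apply_top hN]

/-- The fundamental relation: `c * w = s` where `w = swap (N-1) N`. -/
lemma hcw (hN : 2 ≤ N) :
    sigmaRot (N + 1) N * Equiv.swap (⟨N - 1, by omega⟩ : Fin (N + 1)) (lastF N)
      = sigmaRot (N + 1) (N + 1) := by
  have hN1 : 1 ≤ N := by omega
  ext x
  rw [Equiv.Perm.mul_apply]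
  rcases lt_trichotomy (x : ℕ) (N - 1) with hx | hx | hx
  · rw [Equiv.swap_apply_of_ne_of_ne (by simp [Fin.ext_iff]; omega) (by simp [Fin.ext_iff, lastF]; omega)]
    rw [c_apply_lt hN1 x hx, s_apply_lt x (by omega)]
  · have hx' : x = ⟨N - 1, by omega⟩ := by simp [Fin.ext_iff]; omega
    rw [hx', Equiv.swap_apply_left, c_apply_last hN1]
    have := s_apply_lt (⟨N - 1, by omega⟩ : Fin (N + 1)) (by simp; omega)
    simp [lastF] at this ⊢
    omega
  · have hx' : x = lastF N := by
      have := x.2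
      simp [Fin.ext_iff, lastF]; omega
    rw [hx', Equiv.swap_apply_right, c_apply_top hN1, s_apply_last]

/-- `h^t` applied to the last point. -/
lemma hpow_last (hN : 2 ≤ N) (t : ℕ) (h1 : 1 ≤ t) (h2 : t ≤ N - 1) :
    (((sigmaRot (N + 1) N)⁻¹ * (sigmaRot (N + 1) N)⁻¹ * sigmaRot (N + 1) (N + 1)) ^ t)
      (lastF N) = ⟨N - 1 - t, by omega⟩ := by
  have hN1 : 1 ≤ N := by omega
  induction t with
  | zero => omega
  | succ t ih =>
    rcases Nat.eq_or_lt_of_le h1 with h | h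
    · -- t + 1 = 1
      have ht0 : t = 0 := by omega
      subst ht0
      rw [pow_one]
      simp only [Equiv.Perm.mul_apply]
      rw [s_apply_last, cinv_zero hN1, cinv_apply hN1 (N - 1) (by omega) (by omega)]
    · have ht1 : 1 ≤ t := by omega
      have ht2 : t ≤ N - 2 := by omega
      rw [pow_succ', Equiv.Perm.mul_apply, ih ht1 (by omega)]
      simp only [Equiv.Perm.mul_apply]
      have hs := s_apply_lt (⟨N - 1 - t, by omega⟩ : Fin (N + 1)) (by simp; omega)
      have hseq : sigmaRot (N + 1) (N + 1) ⟨N - 1 - t, by omega⟩ = ⟨N - t, by omega⟩ := by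
        simp [Fin.ext_iff] at hs ⊢; omega
      rw [hseq, cinv_apply hN1 (N - t) (by omega) (by omega)]
      have : N - t - 1 = N - 1 - t := by omega
      simp only [this]
      rw [cinv_apply hN1 (N - 1 - t) (by omega) (by omega)]
      simp [Fin.ext_iff]
      omega

end CVals

section Counting
variable {N : ℕ}

lemma card_fiber (v : Fin (N + 1)) :
    (Finset.univ.filter fun b : Equiv.Perm (Fin (N + 1)) => b (lastF N) = v).card
      = Nat.factorial N := by
  classical
  have key : (Finset.univ : Finset (Equiv.Perm (Fin N))).card
      = (Finset.univ.filter fun b : Equiv.Perm (Fin (N + 1)) => b (lastF N) = v).card := by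
    refine Finset.card_bij' (fun e _ => Equiv.swap (lastF N) v * emb e)
      (fun b hb => unemb (Equiv.swap (lastF N) v * b) ?_) ?_ ?_ ?_ ?_
    · simp only [Finset.mem_filter] at hb
      show (Equiv.swap (lastF N) v) (b (lastF N)) = lastF N
      rw [hb.2, Equiv.swap_apply_right]
    · intro e _
      simp only [Finset.mem_filter, Finset.mem_univ, true_and]
      rw [Equiv.Perm.mul_apply, emb_apply_last e _ (by simp [lastF]), Equiv.swap_apply_left]
    · intro b hb
      exact Finset.mem_univ _
    · intro e he
      apply emb_inj
      simp only [emb_unemb, Equiv.swap_mul_self_mul]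
    · intro b hb
      simp only [emb_unemb, Equiv.swap_mul_self_mul]
  rw [← key, Finset.card_univ, Fintype.card_perm, Fintype.card_fin]

lemma card_fin_lt {m : ℕ} (hm : m ≤ N + 1) :
    (Finset.univ.filter fun v : Fin (N + 1) => (v : ℕ) < m).card = m := by
  classical
  have : (Finset.univ.filter fun v : Fin (N + 1) => (v : ℕ) < m)
      = Finset.map (Fin.castLEEmb hm) Finset.univ := by
    ext x
    rw [Finset.mem_map]
    simp only [Finset.mem_filter, Finset.mem_univ, true_and]
    constructor
    · intro hx
      exact ⟨⟨x, hx⟩, by ext; simp⟩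
    · rintro ⟨i, rfl⟩
      simpa using i.2
  rw [this, Finset.card_map, Finset.card_univ, Fintype.card_fin]

lemma card_lastVal_lt {m : ℕ} (hm : m ≤ N + 1) :
    (Finset.univ.filter fun b : Equiv.Perm (Fin (N + 1)) => ((b (lastF N) : ℕ)) < m).card
      = m * Nat.factorial N := by
  classical
  rw [Finset.card_eq_sum_card_fiberwise
    (f := fun b : Equiv.Perm (Fin (N + 1)) => b (lastF N))
    (t := Finset.univ.filter fun v : Fin (N + 1) => (v : ℕ) < m)
    (fun b hb => by simp only [Finset.coe_filter, Finset.mem_univ, true_and, Set.mem_setOf_eq] at hb ⊢; exact hb)]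
  have heq : ∀ v ∈ Finset.univ.filter fun v : Fin (N + 1) => (v : ℕ) < m,
      ((Finset.univ.filter fun b : Equiv.Perm (Fin (N + 1)) => ((b (lastF N) : ℕ)) < m).filter
        fun b => b (lastF N) = v).card = Nat.factorial N := by
    intro v hv
    simp only [Finset.mem_filter, Finset.mem_univ, true_and] at hv
    rw [← card_fiber v]
    congr 1
    ext b
    simp only [Finset.mem_filter, Finset.mem_univ, true_and]
    constructor
    · rintro ⟨-, h⟩; exact h
    · intro h; exact ⟨by rw [h]; exact hv, h⟩
  rw [Finset.sum_congr rfl heq, Finset.sum_const, card_fin_lt hm, smul_eq_mul]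

end Counting
end St14

namespace St14

def Pfun {G : Type*} [Group G] (g h : G) (j : ℕ) : G :=
  if j = 0 then 1 else g * h ^ (j - 1)

def decode (m F j i : ℕ) : ℕ :=
  if j = 0 then i
  else if j = m - 1 then F + ((m - 2) * (F - 1) + i)
  else if i = F - 1 then F + ((m - 2) * (F - 1) + (F + (m - 2 - j)))
  else F + ((j - 1) * (F - 1) + i)

lemma lastVal_eq {N : ℕ} (a : Equiv.Perm (Fin (N + 1))) :
    lastVal a = ((a (lastF N) : Fin (N + 1)) : ℕ) := by
  rw [lastVal, dif_pos (by omega : 0 < N + 1)]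
  congr 1

end St14

open St14 in
/-- Let `n ≥ 3` and `R ⊆ {2,…,n-1}` with `n-1 ∈ R`. If `S` is a Hamilton
sequence for `RR_{n-1}(R)` whose last two entries both equal `n-1`, then for every
`m ∈ {2,…,n}`, `rewind_m(S)` is a Hamilton sequence for `RIR_n(R ∪ {n}, m)`. -/
theorem stmt14 (n : ℕ) (hn : 3 ≤ n) (R : Set ℕ) (hR : R ⊆ {r | 2 ≤ r ∧ r ≤ n - 1})
    (hmem : (n - 1) ∈ R) (S : List ℕ) (hS : IsHamiltonSeq (n - 1) R S)
    (hlast : ∃ T, S = T ++ [n - 1, n - 1]) (m : ℕ) (hm2 : 2 ≤ m) (hm : m ≤ n) :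
    IsHamiltonSeqRIR n m (R ∪ {n}) (rewindOp n m S) := by
  classical
  obtain ⟨N, rfl⟩ : ∃ N, n = N + 1 := ⟨n - 1, by omega⟩
  have hN : 2 ≤ N := by omega
  obtain ⟨μ, rfl⟩ : ∃ μ, m = μ + 2 := ⟨m - 2, by omega⟩
  simp only [Nat.add_sub_cancel] at hR hmem hS hlast ⊢
  obtain ⟨T, hlastT⟩ := hlast
  obtain ⟨hlen, hmemS, hinj, hprod1⟩ := hS
  have hμm : μ + 2 ≤ N + 1 := hm
  have hμN : μ ≤ N - 1 := by omega
  -- abbreviations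
  set F := N.factorial with hFdef
  have hF2 : 2 ≤ F := by
    have := Nat.self_le_factorial N
    omega
  have hTlen : T.length = F - 2 := by
    rw [hlastT] at hlen
    simp at hlen
    omega
  set c := sigmaRot (N + 1) N with hc
  set s := sigmaRot (N + 1) (N + 1) with hs
  set wsw := Equiv.swap (⟨N - 1, by omega⟩ : Fin (N + 1)) (lastF N) with hwsw
  set g := c⁻¹ * s with hg
  set h := c⁻¹ * c⁻¹ * s with hh
  have hScw : c * wsw = s := hcw hN
  have hgw : g = wsw := by rw [hg, ← hScw, inv_mul_cancel_left]
  have hgg : g * g = 1 := by rw [hgw]; exact Equiv.swap_mul_self _ _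
  have hhcg : h = c⁻¹ * g := by rw [hh, hg, mul_assoc]
  -- partial products of S in Fin (N+1)
  set q : ℕ → Equiv.Perm (Fin (N + 1)) := fun i => partialProd (N + 1) S i with hq
  have hSR : ∀ r ∈ S, 2 ≤ r ∧ r ≤ N := fun r hr => hR (hmemS r hr)
  have hq_emb : ∀ i, q i = emb (partialProd N S i) := fun i =>
    emb_pp S (fun r hr => (hSR r hr).2) (by omega) i
  have hq_last : ∀ i, q i (lastF N) = lastF N := by
    intro i
    rw [hq_emb i]
    exact emb_apply_last _ _ (by simp [lastF])
  have hqinj : ∀ i < F, ∀ j < F, q i = q j → i = j := by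
    intro i hi j hj hij
    rw [hq_emb i, hq_emb j] at hij
    exact hinj i hi j hj (emb_inj hij)
  have hqF : q F = 1 := by
    rw [hq_emb F]
    have h1 : partialProd N S F = 1 := by
      rw [← hlen] at *
      exact hprod1
    rw [h1, emb_one]
  -- products of the pieces of S
  have hppTc : partialProd (N + 1) T T.length * (c * c) = 1 := by
    have h1 : partialProd (N + 1) (T ++ [N, N]) (T.length + 2)
        = partialProd (N + 1) T T.length * partialProd (N + 1) [N, N] 2 :=
      pp_shift (N + 1) T [N, N] 2
    have h2 : partialProd (N + 1) [N, N] 2 = c * c := by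
      simp [partialProd, hc]
    have h3 : T.length + 2 = F := by omega
    rw [h3, h2, ← hlastT] at h1
    rw [← h1]
    exact hqF
  have hppT : partialProd (N + 1) T T.length = c⁻¹ * c⁻¹ := by
    rw [mul_eq_one_iff_eq_inv.mp hppTc, mul_inv_rev]
  have hqFm1 : q (F - 1) = c⁻¹ := by
    have h1 : partialProd (N + 1) (T ++ [N, N]) (T.length + 1)
        = partialProd (N + 1) T T.length * partialProd (N + 1) [N, N] 1 :=
      pp_shift (N + 1) T [N, N] 1
    have h2 : partialProd (N + 1) [N, N] 1 = c := by
      simp [partialProd, hc]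
    have h3 : T.length + 1 = F - 1 := by omega
    rw [h3, h2, hppT, ← hlastT] at h1
    show partialProd (N + 1) S (F - 1) = c⁻¹
    rw [h1, mul_assoc, inv_mul_cancel, mul_one]
  have hq_eq : ∀ i ≤ F - 1, q i = partialProd (N + 1) (T ++ [N]) i := by
    intro i hi
    have h7 : S = (T ++ [N]) ++ [N] := by rw [hlastT]; simp
    have h6 : (T ++ [N]).length = F - 1 := by simp; omega
    show partialProd (N + 1) S i = _
    rw [h7]
    exact pp_prefix _ _ _ (by rw [h6]; omega)
  have hq_eqT : ∀ i ≤ F - 2, q i = partialProd (N + 1) T i := by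
    intro i hi
    show partialProd (N + 1) S i = _
    rw [hlastT]
    exact pp_prefix _ _ _ (by omega)
  -- the pieces of the rewind sequence
  set W := rewindOp (N + 1) (μ + 2) S with hWdef
  set W1 : List ℕ := T ++ [N, N + 1] with hW1
  set W2 : List ℕ := T ++ [N + 1] with hW2
  set Mid : List ℕ := (List.replicate μ W2).flatten with hMid
  set Tl : List ℕ := List.replicate μ (N + 1) with hTl
  have hW1len : W1.length = F := by rw [hW1]; simp; omega
  have hW2len : W2.length = F - 1 := by rw [hW2]; simp; omega
  have hMidlen : Mid.length = μ * (F - 1) := by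
    rw [hMid, List.length_flatten, List.map_replicate, hW2len, List.sum_replicate,
      smul_eq_mul]
  have hTllen : Tl.length = μ := by rw [hTl]; simp
  have hWeq : W = W1 ++ (Mid ++ (W1 ++ Tl)) := by
    have hdl : S.dropLast.dropLast = T := by
      rw [hlastT]
      have h5 : T ++ [N, N] = (T ++ [N]) ++ [N] := by simp
      rw [h5, List.dropLast_concat, List.dropLast_concat]
    rw [hWdef, rewindOp, hdl]
    simp only [Nat.add_sub_cancel, Nat.add_sub_cancel_left]
    rw [hW1, hMid, hW2, hTl]
    simp [List.append_assoc]
  have hLsum : (μ + 2) * F = 2 * F + (μ * (F - 1) + μ) := by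
    obtain ⟨F', hF'⟩ : ∃ F', F = F' + 2 := ⟨F - 2, by omega⟩
    rw [hF']
    have h6 : F' + 2 - 1 = F' + 1 := by omega
    rw [h6]
    ring
  have hWlen : W.length = (μ + 2) * F := by
    rw [hWeq]
    simp only [List.length_append]
    rw [hW1len, hMidlen, hTllen, hLsum]
    omega
  -- prefix formulas
  have hR1 : ∀ i ≤ F - 1, partialProd (N + 1) W i = q i := by
    intro i hi
    rw [hWeq, pp_prefix _ _ _ (by rw [hW1len]; omega)]
    have h5 : W1 = (T ++ [N]) ++ [N + 1] := by rw [hW1]; simp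
    have h6 : (T ++ [N]).length = F - 1 := by simp; omega
    rw [h5, pp_prefix _ _ _ (by rw [h6]; omega)]
    exact (hq_eq i hi).symm
  have hTN : partialProd (N + 1) (T ++ [N]) (F - 1) = c⁻¹ := by
    rw [← hq_eq (F - 1) (le_refl _)]
    exact hqFm1
  have hW1F : partialProd (N + 1) W1 F = g := by
    have h5 : W1 = (T ++ [N]) ++ [N + 1] := by rw [hW1]; simp
    have h6 : (T ++ [N]).length = F - 1 := by simp; omega
    have h8 := pp_shift (N + 1) (T ++ [N]) [N + 1] 1
    rw [h6] at h8
    have h9 : F - 1 + 1 = F := by omega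
    rw [h9] at h8
    have h10 : partialProd (N + 1) [N + 1] 1 = s := by
      simp [partialProd, hs]
    rw [h5, h8, hTN, h10, hg]
  have hW2pp : ∀ i ≤ F - 2, partialProd (N + 1) W2 i = q i := by
    intro i hi
    rw [hW2, pp_prefix _ _ _ (by omega)]
    exact (hq_eqT i hi).symm
  have hW2F : partialProd (N + 1) W2 (F - 1) = h := by
    have h8 := pp_shift (N + 1) T [N + 1] 1
    rw [hTlen] at h8
    have h9 : F - 2 + 1 = F - 1 := by omega
    rw [h9] at h8
    have h10 : partialProd (N + 1) [N + 1] 1 = s := by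
      simp [partialProd, hs]
    have h11 : partialProd (N + 1) T (F - 2) = c⁻¹ * c⁻¹ := by
      rw [← hTlen]
      exact hppT
    rw [hW2, h8, h11, h10, hh]
  have hMidF : partialProd (N + 1) Mid (μ * (F - 1)) = h ^ μ := by
    rcases Nat.eq_zero_or_pos μ with hμ0 | hμ0
    · subst hμ0
      simp [hMid, partialProd]
    · obtain ⟨μ', rfl⟩ : ∃ μ', μ = μ' + 1 := ⟨μ - 1, by omega⟩
      have h12 := pp_flatten_replicate (N + 1) W2 (k := μ' + 1) (j := μ') (i := F - 1)
        (by omega) (by rw [hW2len])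
      rw [hW2len, hW2F] at h12
      have h13 : μ' * (F - 1) + (F - 1) = (μ' + 1) * (F - 1) := by ring
      rw [h13] at h12
      rw [hMid, h12, ← pow_succ]
  have hR2 : ∀ j' i, j' < μ → i ≤ F - 1 →
      partialProd (N + 1) W (F + (j' * (F - 1) + i))
        = g * (h ^ j' * partialProd (N + 1) W2 i) := by
    intro j' i hj' hi
    have h14 := pp_shift (N + 1) W1 (Mid ++ (W1 ++ Tl)) (j' * (F - 1) + i)
    rw [hW1len, hW1F] at h14
    rw [hWeq, h14]
    have hdle : j' * (F - 1) + i ≤ μ * (F - 1) := by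
      have h15 : j' * (F - 1) + (F - 1) ≤ μ * (F - 1) := by
        calc j' * (F - 1) + (F - 1) = (j' + 1) * (F - 1) := by ring
          _ ≤ μ * (F - 1) := Nat.mul_le_mul_right _ (by omega)
      omega
    rw [pp_prefix _ _ _ (by rw [hMidlen]; exact hdle)]
    have h16 := pp_flatten_replicate (N + 1) W2 (k := μ) (j := j') (i := i)
      hj' (by rw [hW2len]; omega)
    rw [hW2len, hW2F] at h16
    rw [h16]
  have hR3 : ∀ i ≤ F, partialProd (N + 1) W (F + (μ * (F - 1) + i))
      = g * (h ^ μ * partialProd (N + 1) W1 i) := by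
    intro i hi
    have h14 := pp_shift (N + 1) W1 (Mid ++ (W1 ++ Tl)) (μ * (F - 1) + i)
    rw [hW1len, hW1F] at h14
    rw [hWeq, h14]
    have h17 := pp_shift (N + 1) Mid (W1 ++ Tl) i
    rw [hMidlen, hMidF] at h17
    rw [h17, pp_prefix _ _ _ (by rw [hW1len]; omega)]
  have hR4 : ∀ t ≤ μ, partialProd (N + 1) W (F + (μ * (F - 1) + (F + t)))
      = g * (h ^ μ * (g * s ^ t)) := by
    intro t ht
    have h14 := pp_shift (N + 1) W1 (Mid ++ (W1 ++ Tl)) (μ * (F - 1) + (F + t))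
    rw [hW1len, hW1F] at h14
    rw [hWeq, h14]
    have h17 := pp_shift (N + 1) Mid (W1 ++ Tl) (F + t)
    rw [hMidlen, hMidF] at h17
    rw [h17]
    have h18 := pp_shift (N + 1) W1 Tl t
    rw [hW1len, hW1F] at h18
    rw [h18, hTl, pp_replicate _ _ ht, ← hs]
  -- group identities
  have key : ∀ t, h ^ (t + 1) * (g * s ^ t) = c⁻¹ := by
    intro t
    induction t with
    | zero =>
        rw [pow_one, pow_zero, mul_one, hhcg, mul_assoc, hgg, mul_one]
    | succ t ih =>
        have e1 : h ^ (t + 1 + 1) * (g * s ^ (t + 1))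
            = h * ((h ^ (t + 1) * (g * s ^ t)) * s) := by
          rw [pow_succ' h (t + 1), pow_succ s t]
          group
        rw [e1, ih, ← hg, hhcg, mul_assoc, hgg, mul_one]
  have hkey2 : ∀ t, t < μ → h ^ μ * (g * s ^ t) = h ^ (μ - 1 - t) * c⁻¹ := by
    intro t ht
    have e : μ - 1 - t + (t + 1) = μ := by omega
    have e2 : h ^ (μ - 1 - t) * h ^ (t + 1) = h ^ μ := by
      rw [← pow_add, e]
    calc h ^ μ * (g * s ^ t) = h ^ (μ - 1 - t) * (h ^ (t + 1) * (g * s ^ t)) := by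
          rw [← e2, mul_assoc]
      _ = h ^ (μ - 1 - t) * c⁻¹ := by rw [key t]
  have hfinal : g * (h ^ μ * (g * s ^ μ)) = 1 := by
    have k1 := key μ
    have k2 : h * (h ^ μ * (g * s ^ μ)) = c⁻¹ := by
      rw [← k1, pow_succ']
      group
    have k3 : h ^ μ * (g * s ^ μ) = h⁻¹ * c⁻¹ := by
      rw [← k2]
      group
    rw [k3, hhcg]
    group
  -- values at the last position
  have hPlast : ∀ j ≤ N, (Pfun g h j) (lastF N) = ⟨N - j, by omega⟩ := by
    intro j hj
    match j with
    | 0 =>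
        simp only [Pfun, if_pos rfl, Equiv.Perm.one_apply]
        simp [lastF, Fin.ext_iff]
    | 1 =>
        simp only [Pfun, if_neg (by omega : (1:ℕ) ≠ 0)]
        norm_num
        rw [hgw, hwsw, Equiv.swap_apply_right]
    | (j + 2) =>
        simp only [Pfun, if_neg (by omega : j + 2 ≠ 0)]
        have h19 : j + 2 - 1 = j + 1 := by omega
        rw [h19]
        have hp := hpow_last hN (j + 1) (by omega) (by omega)
        rw [← hc, ← hs, ← hh] at hp
        rw [Equiv.Perm.mul_apply, hp, hgw, hwsw,
          Equiv.swap_apply_of_ne_of_ne (by simp [Fin.ext_iff]; omega)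
            (by simp [lastF, Fin.ext_iff]; omega)]
        simp [Fin.ext_iff]
        omega
  -- normal form for every index
  have hPsucc : ∀ k : ℕ, Pfun g h (k + 1) = g * h ^ k := by
    intro k
    rw [Pfun, if_neg (by omega : ¬(k + 1 = 0)), Nat.add_sub_cancel]
  have hnorm : ∀ ℓ < (μ + 2) * F, ∃ j i, j < μ + 2 ∧ i < F ∧
      partialProd (N + 1) W ℓ = Pfun g h j * q i ∧ decode (μ + 2) F j i = ℓ := by
    intro ℓ hℓ
    rw [hLsum] at hℓ
    by_cases h1 : ℓ < F
    · refine ⟨0, ℓ, by omega, h1, ?_, ?_⟩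
      · rw [hR1 ℓ (by omega), Pfun, if_pos rfl, one_mul]
      · rw [decode, if_pos rfl]
    · by_cases h2 : ℓ - F < μ * (F - 1)
      · -- middle blocks
        obtain ⟨j', i, hdi, hiF⟩ : ∃ j' i, j' * (F - 1) + i = ℓ - F ∧ i < F - 1 :=
          ⟨(ℓ - F) / (F - 1), (ℓ - F) % (F - 1),
            by rw [mul_comm]; exact Nat.div_add_mod _ _, Nat.mod_lt _ (by omega)⟩
        have hj'μ : j' < μ := by
          by_contra hcon
          have : μ * (F - 1) ≤ j' * (F - 1) := Nat.mul_le_mul_right _ (by omega)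
          omega
        have hℓeq : ℓ = F + (j' * (F - 1) + i) := by omega
        refine ⟨j' + 1, i, by omega, by omega, ?_, ?_⟩
        · rw [hℓeq, hR2 j' i hj'μ (by omega), hW2pp i (by omega), hPsucc j', hg]
          group
        · rw [decode, if_neg (by omega : ¬(j' + 1 = 0)),
            if_neg (by omega : ¬(j' + 1 = μ + 2 - 1)), if_neg (by omega : ¬(i = F - 1)),
            Nat.add_sub_cancel, hℓeq]
      · by_cases h3 : ℓ - F - μ * (F - 1) < F
        · -- last full block
          obtain ⟨e, hℓeq⟩ : ∃ e, ℓ = F + (μ * (F - 1) + e) :=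
            ⟨ℓ - F - μ * (F - 1), by omega⟩
          have heF : e < F := by omega
          refine ⟨μ + 1, e, by omega, heF, ?_, ?_⟩
          · have h20 : partialProd (N + 1) W1 e = q e := by
              have h5 : W1 = (T ++ [N]) ++ [N + 1] := by rw [hW1]; simp
              have h6 : (T ++ [N]).length = F - 1 := by simp; omega
              rw [h5, pp_prefix _ _ _ (by rw [h6]; omega)]
              exact (hq_eq e (by omega)).symm
            rw [hℓeq, hR3 e (by omega), h20, hPsucc μ, hg]
            group
          · rw [decode, if_neg (by omega : ¬(μ + 1 = 0)),
              if_pos (by omega : μ + 1 = μ + 2 - 1)]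
            have h23 : μ + 2 - 2 = μ := by omega
            rw [h23, hℓeq]
        · -- tail
          obtain ⟨t, hℓeq⟩ : ∃ t, ℓ = F + (μ * (F - 1) + (F + t)) :=
            ⟨ℓ - F - μ * (F - 1) - F, by omega⟩
          have htμ : t < μ := by omega
          obtain ⟨t', ht'⟩ : ∃ t', μ - t = t' + 1 := ⟨μ - t - 1, by omega⟩
          refine ⟨μ - t, F - 1, by omega, by omega, ?_, ?_⟩
          · rw [hℓeq, hR4 t (by omega), hkey2 t htμ, ← hqFm1, ht', hPsucc t']
            have h21 : t' = μ - 1 - t := by omega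
            rw [h21, hg]
            group
          · rw [decode, if_neg (by omega : ¬(μ - t = 0)),
              if_neg (by omega : ¬(μ - t = μ + 2 - 1)), if_pos rfl]
            have h24 : μ + 2 - 2 = μ := by omega
            have h22 : μ - (μ - t) = t := by omega
            rw [h24, h22, hℓeq]
  -- injectivity of the walk
  have hinjW : ∀ i < (μ + 2) * F, ∀ j < (μ + 2) * F,
      Fin.revPerm * partialProd (N + 1) W i = Fin.revPerm * partialProd (N + 1) W j →
        i = j := by
    intro i hi j hj heq
    obtain ⟨ji, ii, hji, hii, hei, hdi⟩ := hnorm i hi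
    obtain ⟨jj, ij, hjj, hij, hej, hdj⟩ := hnorm j hj
    have hpp : partialProd (N + 1) W i = partialProd (N + 1) W j := mul_left_cancel heq
    rw [hei, hej] at hpp
    have hPQ : ∀ jx ix, jx ≤ N → (Pfun g h jx * q ix) (lastF N)
        = (⟨N - jx, by omega⟩ : Fin (N + 1)) := by
      intro jx ix hjx
      rw [Equiv.Perm.mul_apply, hq_last, hPlast jx hjx]
    have hlasteq := congrArg (fun p : Equiv.Perm (Fin (N + 1)) => p (lastF N)) hpp
    simp only [hPQ ji ii (by omega), hPQ jj ij (by omega)] at hlasteq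
    have hjieq : ji = jj := by
      have := Fin.mk.injEq (N - ji) _ (N - jj) _ ▸ hlasteq
      simp [Fin.ext_iff] at hlasteq
      omega
    subst hjieq
    have hqq : q ii = q ij := mul_left_cancel hpp
    have hiieq : ii = ij := hqinj ii hii ij hij hqq
    rw [← hdi, ← hdj, hiieq]
  -- the conclusion
  rw [IsHamiltonSeqRIR]
  simp only [Nat.add_sub_cancel]
  refine ⟨by rw [hWlen], ?_, ?_, ?_, ?_⟩
  · -- membership
    have hT_mem : ∀ r ∈ T, r ∈ R := fun r hr =>
      hmemS r (by rw [hlastT]; exact List.mem_append_left _ hr)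
    have hmW1 : ∀ r ∈ W1, r ∈ R ∪ {N + 1} := by
      intro r hr
      rw [hW1] at hr
      rcases List.mem_append.mp hr with h' | h'
      · exact Or.inl (hT_mem r h')
      · simp only [List.mem_cons, List.mem_singleton] at h'
        rcases h' with h' | h' | h'
        · exact Or.inl (h' ▸ hmem)
        · exact Or.inr (by simp [h'])
        · simp at h'
    have hmW2 : ∀ r ∈ W2, r ∈ R ∪ {N + 1} := by
      intro r hr
      rw [hW2] at hr
      rcases List.mem_append.mp hr with h' | h'
      · exact Or.inl (hT_mem r h')
      · simp only [List.mem_singleton] at h'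
        exact Or.inr (by simp [h'])
    intro r hr
    rw [hWeq] at hr
    rcases List.mem_append.mp hr with h' | h'
    · exact hmW1 r h'
    rcases List.mem_append.mp h' with h' | h'
    · rw [hMid] at h'
      obtain ⟨l, hl, hrl⟩ := List.mem_flatten.mp h'
      rw [List.eq_of_mem_replicate hl] at hrl
      exact hmW2 r hrl
    rcases List.mem_append.mp h' with h' | h'
    · exact hmW1 r h'
    · rw [hTl] at h'
      exact Or.inr (by simp [List.eq_of_mem_replicate h'])
  · -- injectivity
    intro i hi j hj heq
    rw [hWlen] at hi hj
    exact hinjW i hi j hj heq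
  · -- set equality
    have hsub : {b | ∃ i < W.length, b = Fin.revPerm * partialProd (N + 1) W i}
        ⊆ {b : Equiv.Perm (Fin (N + 1)) | lastVal b < μ + 2} := by
      rintro b ⟨i, hi, rfl⟩
      rw [hWlen] at hi
      obtain ⟨j, i', hj, hi', he, -⟩ := hnorm i hi
      rw [Set.mem_setOf_eq, he, lastVal_eq, Equiv.Perm.mul_apply, Equiv.Perm.mul_apply,
        hq_last, hPlast j (by omega)]
      simp only [Fin.revPerm_apply, Fin.val_rev]
      omega
    have hcard1 : {b | ∃ i < W.length, b = Fin.revPerm * partialProd (N + 1) W i}.ncard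
        = (μ + 2) * F := by
      have himg : {b | ∃ i < W.length, b = Fin.revPerm * partialProd (N + 1) W i}
          = ↑((Finset.range ((μ + 2) * F)).image
              fun i => Fin.revPerm * partialProd (N + 1) W i) := by
        ext b
        simp only [Set.mem_setOf_eq, Finset.coe_image, Set.mem_image, Finset.mem_coe,
          Finset.mem_range, hWlen]
        constructor
        · rintro ⟨i, hi, rfl⟩
          exact ⟨i, hi, rfl⟩
        · rintro ⟨i, hi, rfl⟩
          exact ⟨i, hi, rfl⟩
      rw [himg, Set.ncard_coe_finset]
      rw [Finset.card_image_of_injOn, Finset.card_range]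
      intro x hx y hy hxy
      simp only [Finset.coe_range, Set.mem_Iio] at hx hy
      exact hinjW x hx y hy hxy
    have hcard2 : {b : Equiv.Perm (Fin (N + 1)) | lastVal b < μ + 2}.ncard
        = (μ + 2) * F := by
      have hset : {b : Equiv.Perm (Fin (N + 1)) | lastVal b < μ + 2}
          = ↑(Finset.univ.filter
              fun b : Equiv.Perm (Fin (N + 1)) => ((b (lastF N) : Fin (N + 1)) : ℕ) < μ + 2) := by
        ext b
        simp [lastVal_eq]
      rw [hset, Set.ncard_coe_finset, card_lastVal_lt (by omega)]
    refine Set.eq_of_subset_of_ncard_le hsub (by rw [hcard1, hcard2]) (Set.toFinite _)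
  · -- the final product
    have hWL : W.length = F + (μ * (F - 1) + (F + μ)) := by
      rw [hWlen, hLsum]
      omega
    rw [hWL, hR4 μ (le_refl _), hfinal, mul_one]
end

section
/- For every n ≥ 3, the sequence reuse_n(D_{n−1}), obtained by reusing the canonical recycle sequence D_{n−1}, is a Hamilton sequence for the restricted rotator graph RR_n({2,3,n}). -/
open Equiv

lemma sigmaRot_val {n r : ℕ} (hr1 : 1 ≤ r) (hrn : r ≤ n) (x : Fin n) :
    ((sigmaRot n r x : Fin n) : ℕ) = if x.val < r then (x.val + 1) % r else x.val := by
  have h : r - 1 < n := by omega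
  rw [sigmaRot, dif_pos h]
  rcases n with _ | m
  · omega
  · rcases lt_trichotomy x.val (r-1) with hx | hx | hx
    · have hlt : x < (⟨r-1, h⟩ : Fin (m+1)) := hx
      rw [Fin.cycleRange_of_lt hlt, if_pos (by omega)]
      have hlast : x < Fin.last m := by
        rw [Fin.lt_iff_val_lt_val, Fin.val_last]; omega
      rw [Fin.val_add_one_of_lt hlast, Nat.mod_eq_of_lt (by omega)]
    · have hx' : x = (⟨r-1, h⟩ : Fin (m+1)) := Fin.ext hx
      rw [hx', Fin.cycleRange_self, if_pos (by omega : r-1 < r)]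
      have hr : r - 1 + 1 = r := by omega
      simp [hr, Nat.mod_self]
    · have hgt : (⟨r-1, h⟩ : Fin (m+1)) < x := hx
      rw [Fin.cycleRange_of_gt hgt, if_neg (by omega)]

lemma sigmaRot_pow_val {n r : ℕ} (hr1 : 1 ≤ r) (hrn : r ≤ n) (t : ℕ) (x : Fin n) :
    ((((sigmaRot n r) ^ t) x : Fin n) : ℕ) = if x.val < r then (x.val + t) % r else x.val := by
  induction t generalizing x with
  | zero =>
    simp only [pow_zero, Equiv.Perm.one_apply]
    split
    · next h => exact (Nat.mod_eq_of_lt (by omega)).symm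
    · rfl
  | succ t ih =>
    rw [pow_succ, Equiv.Perm.mul_apply]
    rcases lt_or_ge x.val r with hx | hx
    · have h1 := sigmaRot_val hr1 hrn x
      rw [if_pos hx] at h1
      have h2 := ih (sigmaRot n r x)
      rw [if_pos (by rw [h1]; exact Nat.mod_lt _ (by omega))] at h2
      rw [h2, h1, Nat.mod_add_mod, if_pos hx]
      congr 1
      omega
    · have h1 := sigmaRot_val hr1 hrn x
      rw [if_neg (by omega)] at h1
      have h2 := ih (sigmaRot n r x)
      rw [if_neg (by omega), h1] at h2
      rw [h2, if_neg (by omega)]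


lemma take_flatten_blocks {α : Type u} (n : ℕ) (blk : ℕ → List α) :
    ∀ (S : List ℕ), (∀ r ∈ S, (blk r).length = n) → ∀ i, (hi : i < S.length) → ∀ t, t ≤ n →
      ((S.map blk).flatten).take (n*i + t) = ((S.take i).map blk).flatten ++ (blk S[i]).take t := by
  intro S
  induction S with
  | nil => intro _ i hi; simp at hi
  | cons r S' ih =>
    intro hlen i hi t ht
    match i with
    | 0 =>
      simp only [Nat.mul_zero, Nat.zero_add, List.map_cons, List.flatten_cons, List.take_zero,
        List.map_nil, List.flatten_nil, List.nil_append, List.getElem_cons_zero]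
      exact List.take_append_of_le_length (by rw [hlen r (by simp)]; exact ht)
    | i + 1 =>
      have hr : (blk r).length = n := hlen r (by simp)
      have hkey : n * (i+1) + t = (blk r).length + (n * i + t) := by rw [hr]; ring
      simp only [List.map_cons, List.flatten_cons, hkey, List.take_append,
        List.take_succ_cons, List.getElem_cons_succ]
      rw [List.take_of_length_le (Nat.le_add_right _ _), Nat.add_sub_cancel_left,
        ih (fun r hr => hlen r (by simp [hr])) i (by simpa using hi) t ht,
        List.append_assoc]

lemma prod_blocks (n : ℕ) (blk : ℕ → List ℕ) (c : Equiv.Perm (Fin n)) (L : List ℕ)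
    (hfull : ∀ r ∈ L, ((blk r).map (sigmaRot n)).prod = c * sigmaRot n r * c⁻¹) :
    (((L.map blk).flatten).map (sigmaRot n)).prod = c * (L.map (sigmaRot n)).prod * c⁻¹ := by
  rw [List.map_flatten, List.prod_flatten, List.map_map, List.map_map]
  have h1 : (L.map ((List.prod ∘ List.map (sigmaRot n)) ∘ blk)) =
      L.map ((fun g => c * g * c⁻¹) ∘ (sigmaRot n)) := by
    apply List.map_congr_left
    intro r hr
    exact hfull r hr
  have h2 : ((fun g => c * g * c⁻¹) ∘ (sigmaRot n) : ℕ → Equiv.Perm (Fin n)) =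
      ⇑(MulAut.conj c) ∘ sigmaRot n := by
    funext r; simp [MulAut.conj_apply]
  rw [h1, h2, ← List.map_map]
  exact (map_list_prod (MulAut.conj c) _).symm.trans (by simp [MulAut.conj_apply])

lemma blocks_length (n : ℕ) (blk : ℕ → List ℕ) (S : List ℕ)
    (hlen : ∀ r ∈ S, (blk r).length = n) :
    ((S.map blk).flatten).length = n * S.length := by
  induction S with
  | nil => simp
  | cons r S' ih =>
    simp only [List.map_cons, List.flatten_cons, List.length_append, List.length_cons]
    rw [hlen r (by simp), ih (fun r hr => hlen r (by simp [hr]))]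
    ring

lemma goodblock_formula (n : ℕ) (blk : ℕ → List ℕ) (B : ℕ → Equiv.Perm (Fin n))
    (c : Equiv.Perm (Fin n)) (S : List ℕ)
    (hlen : ∀ r ∈ S, (blk r).length = n)
    (hpart : ∀ r ∈ S, ∀ t < n, (((blk r).take t).map (sigmaRot n)).prod = B t)
    (hfull : ∀ r ∈ S, ((blk r).map (sigmaRot n)).prod = c * sigmaRot n r * c⁻¹)
    (i t : ℕ) (hi : i < S.length) (ht : t < n) :
    partialProd n ((S.map blk).flatten) (n*i + t)
      = c * partialProd n S i * c⁻¹ * B t := by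
  unfold partialProd
  rw [take_flatten_blocks n blk S hlen i hi t (le_of_lt ht), List.map_append, List.prod_append,
    prod_blocks n blk c _ (fun r hr => hfull r (List.mem_of_mem_take hr)),
    hpart S[i] (by exact List.getElem_mem hi) t ht]

lemma goodblock_total (n : ℕ) (blk : ℕ → List ℕ) (c : Equiv.Perm (Fin n)) (S : List ℕ)
    (hfull : ∀ r ∈ S, ((blk r).map (sigmaRot n)).prod = c * sigmaRot n r * c⁻¹)
    (htot : partialProd n S S.length = 1) :
    partialProd n ((S.map blk).flatten) ((S.map blk).flatten).length = 1 := by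
  unfold partialProd at htot ⊢
  rw [List.take_length] at htot ⊢
  rw [prod_blocks n blk c S hfull, htot]
  group

lemma mod_inv_eq {n t t' : ℕ} (ht : t < n) (ht' : t' < n) (h : (n - t) % n = (n - t') % n) :
    t = t' := by
  rcases Nat.eq_zero_or_pos t with rfl | hp
  · rcases Nat.eq_zero_or_pos t' with rfl | hp'
    · rfl
    · rw [Nat.sub_zero, Nat.mod_self, Nat.mod_eq_of_lt (by omega)] at h; omega
  · rcases Nat.eq_zero_or_pos t' with rfl | hp'
    · rw [Nat.sub_zero, Nat.mod_self, Nat.mod_eq_of_lt (by omega)] at h; omega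
    · rw [Nat.mod_eq_of_lt (by omega), Nat.mod_eq_of_lt (by omega)] at h; omega

set_option maxHeartbeats 1000000 in
lemma conj_block_inv_zero (n : ℕ) (hn : 0 < n) (c Q Bt : Equiv.Perm (Fin n))
    (hc : c ⟨n-1, Nat.sub_lt hn Nat.one_pos⟩ = ⟨0, hn⟩) (hQ : Q ⟨n-1, Nat.sub_lt hn Nat.one_pos⟩ = ⟨n-1, Nat.sub_lt hn Nat.one_pos⟩) :
    (c * Q * c⁻¹ * Bt)⁻¹ ⟨0, hn⟩ = Bt⁻¹ ⟨0, hn⟩ := by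
  have hcinv : c⁻¹ ⟨0, hn⟩ = ⟨n-1, Nat.sub_lt hn Nat.one_pos⟩ := by
    rw [← hc, ← Equiv.Perm.mul_apply, inv_mul_cancel, Equiv.Perm.one_apply]
  have hQinv : Q⁻¹ ⟨n-1, Nat.sub_lt hn Nat.one_pos⟩ = ⟨n-1, Nat.sub_lt hn Nat.one_pos⟩ := by
    conv_lhs => rw [← hQ]
    rw [← Equiv.Perm.mul_apply, inv_mul_cancel, Equiv.Perm.one_apply]
  simp only [mul_inv_rev, inv_inv, Equiv.Perm.mul_apply, hcinv, hQinv, hc]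

lemma goodblock_inj (n : ℕ) (hn : 0 < n) (blk : ℕ → List ℕ) (B : ℕ → Equiv.Perm (Fin n))
    (c : Equiv.Perm (Fin n)) (S : List ℕ)
    (hlen : ∀ r ∈ S, (blk r).length = n)
    (hpart : ∀ r ∈ S, ∀ t < n, (((blk r).take t).map (sigmaRot n)).prod = B t)
    (hfull : ∀ r ∈ S, ((blk r).map (sigmaRot n)).prod = c * sigmaRot n r * c⁻¹)
    (hc : c ⟨n-1, Nat.sub_lt hn Nat.one_pos⟩ = ⟨0, hn⟩)
    (hB : ∀ t, (htn : t < n) → (B t)⁻¹ ⟨0, hn⟩ = ⟨(n-t) % n, Nat.mod_lt _ hn⟩)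
    (hfix : ∀ i, partialProd n S i ⟨n-1, Nat.sub_lt hn Nat.one_pos⟩ = ⟨n-1, Nat.sub_lt hn Nat.one_pos⟩)
    (hinj : ∀ i < S.length, ∀ j < S.length, partialProd n S i = partialProd n S j → i = j) :
    ∀ u < n * S.length, ∀ v < n * S.length,
      partialProd n ((S.map blk).flatten) u = partialProd n ((S.map blk).flatten) v → u = v := by
  intro u hu v hv heq
  have hiu : u / n < S.length := Nat.div_lt_of_lt_mul hu
  have hiv : v / n < S.length := Nat.div_lt_of_lt_mul hv
  have h1 := goodblock_formula n blk B c S hlen hpart hfull (u/n) (u%n) hiu (Nat.mod_lt _ hn)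
  have h2 := goodblock_formula n blk B c S hlen hpart hfull (v/n) (v%n) hiv (Nat.mod_lt _ hn)
  rw [Nat.div_add_mod] at h1 h2
  rw [h1, h2] at heq
  have e1 := conj_block_inv_zero n hn c (partialProd n S (u/n)) (B (u % n)) hc (hfix (u/n))
  have e2 := conj_block_inv_zero n hn c (partialProd n S (v/n)) (B (v % n)) hc (hfix (v/n))
  have et : u % n = v % n := by
    apply mod_inv_eq (Nat.mod_lt _ hn) (Nat.mod_lt _ hn)
    have : (B (u % n))⁻¹ ⟨0, hn⟩ = (B (v % n))⁻¹ ⟨0, hn⟩ := by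
      rw [← e1, ← e2, heq]
    rw [hB _ (Nat.mod_lt _ hn), hB _ (Nat.mod_lt _ hn)] at this
    simpa using congrArg Fin.val this
  rw [et] at heq
  have eQ : partialProd n S (u/n) = partialProd n S (v/n) := by
    have := mul_right_cancel heq
    have := mul_right_cancel this
    exact mul_left_cancel this
  have hdiv := hinj _ hiu _ hiv eQ
  have du := Nat.div_add_mod u n
  have dv := Nat.div_add_mod v n
  rw [hdiv, et] at du
  omega


lemma revPerm_inv (n : ℕ) : (Fin.revPerm : Equiv.Perm (Fin n))⁻¹ = Fin.revPerm := by
  rfl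

lemma reuse_part (n : ℕ) (hn : 2 ≤ n) (r t : ℕ) (ht : t < n) :
    (((List.replicate (n-1) n ++ [n+1-r]).take t).map (sigmaRot n)).prod
      = (sigmaRot n n) ^ t := by
  rw [List.take_append_of_le_length (by simp; omega), List.take_replicate,
    show min t (n-1) = t from by omega, List.map_replicate, List.prod_replicate]

lemma reuse_Binv (n : ℕ) (hn0 : 0 < n) (t : ℕ) (ht : t < n) :
    ((sigmaRot n n) ^ t)⁻¹ ⟨0, hn0⟩ = ⟨(n-t) % n, Nat.mod_lt _ hn0⟩ := by
  have key : ((sigmaRot n n) ^ t) ⟨(n-t) % n, Nat.mod_lt _ hn0⟩ = ⟨0, hn0⟩ := by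
    apply Fin.ext
    rw [sigmaRot_pow_val (by omega) (le_refl n), if_pos (Nat.mod_lt _ hn0)]
    show ((n-t) % n + t) % n = 0
    rw [Nat.mod_add_mod, show n - t + t = n from by omega, Nat.mod_self]
  rw [← key, ← Equiv.Perm.mul_apply, inv_mul_cancel, Equiv.Perm.one_apply]

lemma reuse_full (n : ℕ) (hn : 2 ≤ n) (r : ℕ) (hr1 : 1 ≤ r) (hrn : r ≤ n - 1) :
    ((List.replicate (n-1) n ++ [n+1-r]).map (sigmaRot n)).prod
      = Fin.revPerm * sigmaRot n r * (Fin.revPerm : Equiv.Perm (Fin n))⁻¹ := by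
  have hn0 : 0 < n := by omega
  rw [List.map_append, List.prod_append, List.map_replicate, List.prod_replicate,
    List.map_singleton, List.prod_singleton, revPerm_inv]
  ext x
  simp only [Equiv.Perm.mul_apply, Fin.revPerm_apply]
  have hs1 : 1 ≤ n + 1 - r := by omega
  have hsn : n + 1 - r ≤ n := by omega
  have hx := sigmaRot_val hs1 hsn x
  have hL := sigmaRot_pow_val (by omega : 1 ≤ n) (le_refl n) (n-1)
      (sigmaRot n (n+1-r) x)
  rw [if_pos (Fin.is_lt _)] at hL
  rw [hL, hx, Fin.val_rev]
  have hRin := sigmaRot_val hr1 (by omega : r ≤ n) (Fin.rev x)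
  rw [Fin.val_rev] at hRin
  rw [hRin]
  rcases lt_trichotomy x.val (n - r) with hc | hc | hc
  · rw [if_pos (by omega), if_neg (by omega)]
    have e1 : (x.val + 1) % (n + 1 - r) = x.val + 1 := Nat.mod_eq_of_lt (by omega)
    rw [e1]
    have e2 : (x.val + 1 + (n-1)) % n = x.val := by
      rw [show x.val + 1 + (n-1) = x.val + n from by omega, Nat.add_mod_right]
      exact Nat.mod_eq_of_lt (by omega)
    rw [e2]
    omega
  · rw [if_pos (by omega), if_pos (by omega)]
    have e1 : (x.val + 1) % (n + 1 - r) = 0 := by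
      rw [show x.val + 1 = n + 1 - r from by omega]; exact Nat.mod_self _
    rw [e1]
    have e2 : (0 + (n-1)) % n = n - 1 := by
      rw [Nat.zero_add]; exact Nat.mod_eq_of_lt (by omega)
    rw [e2]
    have e3 : (n - (x.val + 1) + 1) % r = 0 := by
      rw [show n - (x.val + 1) + 1 = r from by omega]; exact Nat.mod_self _
    rw [e3]
  · rw [if_neg (by omega), if_pos (by omega)]
    have e1 : (x.val + (n-1)) % n = x.val - 1 := by
      rw [show x.val + (n-1) = (x.val - 1) + n from by omega, Nat.add_mod_right]
      exact Nat.mod_eq_of_lt (by omega)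
    rw [e1]
    have e2 : (n - (x.val + 1) + 1) % r = n - x.val := by
      rw [show n - (x.val + 1) + 1 = n - x.val from by omega]
      exact Nat.mod_eq_of_lt (by omega)
    rw [e2]
    omega


/-- The within-block partial products for the recycle operation. -/
def recB (n t : ℕ) : Equiv.Perm (Fin n) :=
  if t ≤ 2 then (sigmaRot n n) ^ t else (sigmaRot n n) ^ 2 * (sigmaRot n (n-1)) ^ (t-2)

lemma recycle_part (n : ℕ) (hn : 3 ≤ n) (r t : ℕ) (hr1 : n - 2 ≤ r) (hrn : r ≤ n - 1)
    (ht : t < n) :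
    (((n :: n :: (List.replicate (r-1) (n-1) ++ List.replicate (n-r-1) n)).take t).map
      (sigmaRot n)).prod = recB n t := by
  match t with
  | 0 => simp [recB]
  | 1 => simp [recB, List.take_succ_cons]
  | 2 =>
    simp only [List.take_succ_cons, List.take_zero, List.map_cons, List.map_nil,
      List.prod_cons, List.prod_nil, recB, if_pos (by omega : (2:ℕ) ≤ 2), pow_two, mul_one]
  | (t + 3) =>
    have h1 : t + 1 ≤ r - 1 := by omega
    rw [List.take_succ_cons, List.take_succ_cons,
      List.take_append_of_le_length (by simp; omega), List.take_replicate,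
      show min (t+1) (r-1) = t+1 from by omega]
    simp only [List.map_cons, List.prod_cons, List.map_replicate, List.prod_replicate]
    rw [recB, if_neg (by omega)]
    rw [show t + 3 - 2 = t + 1 from by omega, pow_two, mul_assoc]

lemma recycle_Binv (n : ℕ) (hn : 3 ≤ n) (t : ℕ) (ht : t < n) :
    (recB n t)⁻¹ ⟨0, by omega⟩ = ⟨(n-t) % n, Nat.mod_lt _ (by omega)⟩ := by
  rcases le_or_gt t 2 with h2 | h2
  · rw [recB, if_pos h2]
    exact reuse_Binv n (by omega) t ht
  · rw [recB, if_neg (by omega)]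
    have key : ((sigmaRot n n) ^ 2 * (sigmaRot n (n-1)) ^ (t-2)) ⟨(n-t) % n, Nat.mod_lt _ (by omega)⟩
        = ⟨0, by omega⟩ := by
      have hnt : (n - t) % n = n - t := Nat.mod_eq_of_lt (by omega)
      apply Fin.ext
      rw [Equiv.Perm.mul_apply]
      have e1 := sigmaRot_pow_val (by omega : 1 ≤ n-1) (by omega : n-1 ≤ n) (t-2)
        (⟨(n-t) % n, Nat.mod_lt _ (by omega)⟩ : Fin n)
      rw [if_pos (by simp only; omega)] at e1
      have e1' : (((sigmaRot n (n-1)) ^ (t-2)) (⟨(n-t) % n, Nat.mod_lt _ (by omega)⟩ : Fin n)).val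
          = n - 2 := by
        rw [e1]
        simp only [hnt]
        rw [show n - t + (t - 2) = n - 2 from by omega]
        exact Nat.mod_eq_of_lt (by omega)
      have e2 := sigmaRot_pow_val (by omega : 1 ≤ n) (le_refl n) 2
        (((sigmaRot n (n-1)) ^ (t-2)) (⟨(n-t) % n, Nat.mod_lt _ (by omega)⟩ : Fin n))
      rw [if_pos (Fin.is_lt _)] at e2
      rw [e2, e1', show n - 2 + 2 = n from by omega, Nat.mod_self]
    rw [← key, ← Equiv.Perm.mul_apply, inv_mul_cancel, Equiv.Perm.one_apply]

lemma recycle_full (n : ℕ) (hn : 3 ≤ n) (r : ℕ) (hr1 : 1 ≤ r) (hrn : r ≤ n - 1) :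
    ((n :: n :: (List.replicate (r-1) (n-1) ++ List.replicate (n-r-1) n)).map
      (sigmaRot n)).prod = sigmaRot n n * sigmaRot n r * (sigmaRot n n)⁻¹ := by
  simp only [List.map_cons, List.prod_cons, List.map_append, List.prod_append,
    List.map_replicate, List.prod_replicate]
  rw [mul_assoc (sigmaRot n n), ← mul_assoc (sigmaRot n n) (sigmaRot n r),
    eq_mul_inv_iff_mul_eq]
  ext x
  simp only [Equiv.Perm.mul_apply]
  -- innermost : σ_n x
  have v1 := sigmaRot_val (by omega : 1 ≤ n) (le_refl n) x
  rw [if_pos x.is_lt] at v1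
  -- σ_n^{n-r-1} of that
  have v2 := sigmaRot_pow_val (by omega : 1 ≤ n) (le_refl n) (n-r-1) (sigmaRot n n x)
  rw [if_pos (Fin.is_lt _), v1, Nat.mod_add_mod,
    show x.val + 1 + (n - r - 1) = x.val + (n - r) from by omega] at v2
  -- σ_{n-1}^{r-1} of that
  have v3 := sigmaRot_pow_val (by omega : 1 ≤ n-1) (by omega : n-1 ≤ n) (r-1)
    (((sigmaRot n n) ^ (n-r-1)) (sigmaRot n n x))
  -- σ_n ∘ σ_n on the outside
  have v4 := sigmaRot_val (by omega : 1 ≤ n) (le_refl n)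
    (((sigmaRot n (n-1)) ^ (r-1)) (((sigmaRot n n) ^ (n-r-1)) (sigmaRot n n x)))
  rw [if_pos (Fin.is_lt _)] at v4
  have v5 := sigmaRot_val (by omega : 1 ≤ n) (le_refl n)
    ((sigmaRot n n) ((((sigmaRot n (n-1)) ^ (r-1)) (((sigmaRot n n) ^ (n-r-1)) (sigmaRot n n x)))))
  rw [if_pos (Fin.is_lt _), v4, Nat.mod_add_mod] at v5
  -- RHS
  have w1 := sigmaRot_val hr1 (by omega : r ≤ n) x
  have w2 := sigmaRot_val (by omega : 1 ≤ n) (le_refl n) (sigmaRot n r x)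
  rw [if_pos (Fin.is_lt _)] at w2
  rw [v5, w2, w1]
  rcases lt_trichotomy x.val (r-1) with hc | hc | hc
  · have hv2 : (x.val + (n - r)) % n = x.val + (n - r) := Nat.mod_eq_of_lt (by omega)
    rw [v2, hv2, if_pos (by omega)] at v3
    have hv3 : (x.val + (n-r) + (r-1)) % (n-1) = x.val := by
      rw [show x.val + (n-r) + (r-1) = x.val + (n-1) from by omega, Nat.add_mod_right]
      exact Nat.mod_eq_of_lt (by omega)
    rw [hv3] at v3
    rw [v3, if_pos (by omega),
      show (x.val + 1) % r = x.val + 1 from Nat.mod_eq_of_lt (by omega)]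
  · have hv2 : (x.val + (n - r)) % n = n - 1 := by
      rw [show x.val + (n-r) = n - 1 from by omega]; exact Nat.mod_eq_of_lt (by omega)
    rw [v2, hv2, if_neg (by omega)] at v3
    rw [v3, if_pos (by omega),
      show (x.val + 1) % r = 0 from by rw [show x.val + 1 = r from by omega]; exact Nat.mod_self _,
      show (n - 1 + 2) % n = (0 + 1) % n from by
        rw [show n - 1 + 2 = 1 + n from by omega, Nat.add_mod_right, Nat.zero_add]]
  · have hv2 : (x.val + (n - r)) % n = x.val - r := by
      rw [show x.val + (n-r) = (x.val - r) + n from by omega, Nat.add_mod_right]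
      exact Nat.mod_eq_of_lt (by omega)
    rw [v2, hv2, if_pos (by omega)] at v3
    have hv3 : (x.val - r + (r-1)) % (n-1) = x.val - 1 := by
      rw [show x.val - r + (r-1) = x.val - 1 from by omega]
      exact Nat.mod_eq_of_lt (by omega)
    rw [hv3] at v3
    rw [v3, if_neg (by omega), show x.val - 1 + 2 = x.val + 1 from by omega]


lemma last_not_mem_range_castSuccEmb (k : ℕ) :
    Fin.last k ∉ Set.range (Fin.castSuccEmb : Fin k ↪ Fin (k+1)) := by
  rintro ⟨y, hy⟩
  exact absurd hy (Fin.castSucc_lt_last y).ne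

lemma sigmaRot_viaEmbedding (k r : ℕ) (hr1 : 1 ≤ r) (hrk : r ≤ k) :
    (sigmaRot k r).viaEmbedding (Fin.castSuccEmb : Fin k ↪ Fin (k+1))
      = sigmaRot (k+1) r := by
  ext x
  induction x using Fin.lastCases with
  | last =>
    rw [Equiv.Perm.viaEmbedding_apply_of_notMem _ _ _ (last_not_mem_range_castSuccEmb k)]
    rw [sigmaRot_val hr1 (by omega), Fin.val_last, if_neg (by omega)]
  | cast y =>
    have h1 : ((Fin.castSuccEmb : Fin k ↪ Fin (k+1)) y) = Fin.castSucc y := rfl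
    rw [← h1, Equiv.Perm.viaEmbedding_apply]
    have h2 : ((Fin.castSuccEmb ((sigmaRot k r) y) : Fin (k+1)) : ℕ) = ((sigmaRot k r) y).val :=
      rfl
    have h3 : ((Fin.castSuccEmb y : Fin (k+1)) : ℕ) = y.val := rfl
    rw [h2, sigmaRot_val hr1 hrk, sigmaRot_val hr1 (by omega : r ≤ k+1), h3]

lemma partialProd_castSucc (k : ℕ) (S : List ℕ) (hS : ∀ r ∈ S, 1 ≤ r ∧ r ≤ k) (i : ℕ) :
    partialProd (k+1) S i
      = Equiv.Perm.viaEmbeddingHom (Fin.castSuccEmb : Fin k ↪ Fin (k+1))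
          (partialProd k S i) := by
  unfold partialProd
  rw [map_list_prod, List.map_map]
  congr 1
  apply List.map_congr_left
  intro r hr
  have := hS r (List.mem_of_mem_take hr)
  show sigmaRot (k+1) r
      = Equiv.Perm.viaEmbeddingHom (Fin.castSuccEmb : Fin k ↪ Fin (k+1)) (sigmaRot k r)
  rw [Equiv.Perm.viaEmbeddingHom_apply, sigmaRot_viaEmbedding k r this.1 this.2]


/-- The induction invariant for the canonical recycle sequences. -/
def RecInv (k : ℕ) : Prop :=
  (recycleD k).length = Nat.factorial k ∧
  (∀ r ∈ recycleD k, 1 ≤ r ∧ k - 1 ≤ r ∧ r ≤ k) ∧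
  (∀ i < Nat.factorial k, ∀ j < Nat.factorial k,
    partialProd k (recycleD k) i = partialProd k (recycleD k) j → i = j) ∧
  partialProd k (recycleD k) (recycleD k).length = 1

lemma inv_two : RecInv 2 := by
  refine ⟨rfl, by decide, ?_, by decide⟩
  intro i hi j hj h
  rw [show Nat.factorial 2 = 2 from rfl] at hi hj
  interval_cases i <;> interval_cases j <;> first
    | rfl
    | (exfalso; revert h; decide)

lemma sigma_last (n : ℕ) (hn : 0 < n) :
    sigmaRot n n ⟨n-1, Nat.sub_lt hn Nat.one_pos⟩ = ⟨0, hn⟩ := by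
  apply Fin.ext
  rw [sigmaRot_val (by omega) (le_refl n), if_pos (by simp only; omega)]
  show (n - 1 + 1) % n = 0
  rw [show n - 1 + 1 = n from by omega, Nat.mod_self]

lemma inv_step (k : ℕ) (hk : 2 ≤ k) (h : RecInv k) : RecInv (k+1) := by
  obtain ⟨hlenS, hmem, hinj, htot⟩ := h
  have hn3 : 3 ≤ k + 1 := by omega
  have hD : recycleD (k+1) = recycleOp (k+1) (recycleD k) := by
    obtain ⟨k', rfl⟩ : ∃ k', k = k' + 1 := ⟨k-1, by omega⟩
    rfl
  set S := recycleD k with hSdef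
  set blk : ℕ → List ℕ :=
    fun r => (k+1) :: (k+1) :: (List.replicate (r-1) k ++ List.replicate (k+1-r-1) (k+1))
    with hblk
  have hOp : recycleOp (k+1) S = (S.map blk).flatten := rfl
  have hSmem : ∀ r ∈ S, 1 ≤ r ∧ r ≤ k := fun r hr => ⟨(hmem r hr).1, (hmem r hr).2.2⟩
  -- lifted facts
  have hfixn : ∀ i, partialProd (k+1) S i ⟨k+1-1, Nat.sub_lt (by omega) Nat.one_pos⟩
      = ⟨k+1-1, Nat.sub_lt (by omega) Nat.one_pos⟩ := by
    intro i
    rw [partialProd_castSucc k S hSmem i, Equiv.Perm.viaEmbeddingHom_apply]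
    exact Equiv.Perm.viaEmbedding_apply_of_notMem _ _ _ (last_not_mem_range_castSuccEmb k)
  have hinjn : ∀ i < S.length, ∀ j < S.length,
      partialProd (k+1) S i = partialProd (k+1) S j → i = j := by
    intro i hi j hj hij
    rw [partialProd_castSucc k S hSmem i, partialProd_castSucc k S hSmem j] at hij
    exact hinj i (hlenS ▸ hi) j (hlenS ▸ hj) (Equiv.Perm.viaEmbeddingHom_injective _ hij)
  have htotn : partialProd (k+1) S S.length = 1 := by
    rw [partialProd_castSucc k S hSmem, htot, map_one]
  -- block hypotheses
  have hlenb : ∀ r ∈ S, (blk r).length = k + 1 := by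
    intro r hr
    have := hmem r hr
    simp only [hblk, List.length_cons, List.length_append, List.length_replicate]
    omega
  have hpartb : ∀ r ∈ S, ∀ t < k+1,
      (((blk r).take t).map (sigmaRot (k+1))).prod = recB (k+1) t := by
    intro r hr t ht
    have := hmem r hr
    exact recycle_part (k+1) hn3 r t (by omega) (by omega) ht
  have hfullb : ∀ r ∈ S, ((blk r).map (sigmaRot (k+1))).prod
      = sigmaRot (k+1) (k+1) * sigmaRot (k+1) r * (sigmaRot (k+1) (k+1))⁻¹ := by
    intro r hr
    have := hmem r hr
    exact recycle_full (k+1) hn3 r (by omega) (by omega)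
  have hc := sigma_last (k+1) (by omega)
  refine ⟨?_, ?_, ?_, ?_⟩
  · rw [hD, hOp, blocks_length (k+1) blk S hlenb, hlenS, Nat.factorial_succ]
  · intro r' hr'
    rw [hD, hOp] at hr'
    rw [List.mem_flatten] at hr'
    obtain ⟨l, hl, hr'l⟩ := hr'
    rw [List.mem_map] at hl
    obtain ⟨r, hrS, rfl⟩ := hl
    have hb := hmem r hrS
    simp only [hblk, List.mem_cons, List.mem_append, List.mem_replicate] at hr'l
    rcases hr'l with h | h | h | h <;> omega
  · intro i hi j hj hij
    rw [hD, hOp] at hij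
    refine goodblock_inj (k+1) (by omega) blk (recB (k+1)) (sigmaRot (k+1) (k+1)) S
      hlenb hpartb hfullb hc (fun t ht => recycle_Binv (k+1) hn3 t ht) hfixn hinjn
      i ?_ j ?_ hij <;>
    · rw [hlenS, ← Nat.factorial_succ]
      omega
  · rw [hD, hOp]
    exact goodblock_total (k+1) blk (sigmaRot (k+1) (k+1)) S hfullb htotn

lemma inv_all (k : ℕ) (hk : 2 ≤ k) : RecInv k := by
  induction k, hk using Nat.le_induction with
  | base => exact inv_two
  | succ k hk ih => exact inv_step k hk ih


/-- For every `n ≥ 3`, the sequence `reuse_n(D_{n-1})`, obtained by reusing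
the canonical recycle sequence `D_{n-1}`, is a Hamilton sequence for `RR_n({2,3,n})`. -/
theorem stmt15 (n : ℕ) (hn : 3 ≤ n) :
    IsHamiltonSeq n {2, 3, n} (reuseOp n (recycleD (n - 1))) := by
  obtain ⟨k, rfl⟩ : ∃ k, n = k + 1 := ⟨n-1, by omega⟩
  have hk : 2 ≤ k := by omega
  obtain ⟨hlenS, hmem, hinj, htot⟩ := inv_all k hk
  have hD : recycleD (k+1-1) = recycleD k := rfl
  rw [hD]
  set S := recycleD k with hSdef
  set blk : ℕ → List ℕ := fun r => List.replicate (k+1-1) (k+1) ++ [(k+1)+1-r] with hblk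
  have hOp : reuseOp (k+1) S = (S.map blk).flatten := rfl
  have hSmem : ∀ r ∈ S, 1 ≤ r ∧ r ≤ k := fun r hr => ⟨(hmem r hr).1, (hmem r hr).2.2⟩
  have hfixn : ∀ i, partialProd (k+1) S i ⟨k+1-1, Nat.sub_lt (by omega) Nat.one_pos⟩
      = ⟨k+1-1, Nat.sub_lt (by omega) Nat.one_pos⟩ := by
    intro i
    rw [partialProd_castSucc k S hSmem i, Equiv.Perm.viaEmbeddingHom_apply]
    exact Equiv.Perm.viaEmbedding_apply_of_notMem _ _ _ (last_not_mem_range_castSuccEmb k)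
  have hinjn : ∀ i < S.length, ∀ j < S.length,
      partialProd (k+1) S i = partialProd (k+1) S j → i = j := by
    intro i hi j hj hij
    rw [partialProd_castSucc k S hSmem i, partialProd_castSucc k S hSmem j] at hij
    exact hinj i (hlenS ▸ hi) j (hlenS ▸ hj) (Equiv.Perm.viaEmbeddingHom_injective _ hij)
  have htotn : partialProd (k+1) S S.length = 1 := by
    rw [partialProd_castSucc k S hSmem, htot, map_one]
  have hlenb : ∀ r ∈ S, (blk r).length = k + 1 := by
    intro r _
    simp only [hblk, List.length_append, List.length_replicate, List.length_singleton]
    omega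
  have hpartb : ∀ r ∈ S, ∀ t < k+1,
      (((blk r).take t).map (sigmaRot (k+1))).prod = (sigmaRot (k+1) (k+1)) ^ t :=
    fun r _ t ht => reuse_part (k+1) (by omega) r t ht
  have hfullb : ∀ r ∈ S, ((blk r).map (sigmaRot (k+1))).prod
      = Fin.revPerm * sigmaRot (k+1) r * (Fin.revPerm : Equiv.Perm (Fin (k+1)))⁻¹ := by
    intro r hr
    have := hmem r hr
    exact reuse_full (k+1) (by omega) r (by omega) (by omega)
  have hc : (Fin.revPerm : Equiv.Perm (Fin (k+1)))
      ⟨k+1-1, Nat.sub_lt (by omega) Nat.one_pos⟩ = ⟨0, by omega⟩ := by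
    apply Fin.ext
    rw [Fin.revPerm_apply, Fin.val_rev]
    simp only []
    omega
  refine ⟨?_, ?_, ?_, ?_⟩
  · rw [hOp, blocks_length (k+1) blk S hlenb, hlenS, ← Nat.factorial_succ]
  · intro r' hr'
    rw [hOp, List.mem_flatten] at hr'
    obtain ⟨l, hl, hr'l⟩ := hr'
    rw [List.mem_map] at hl
    obtain ⟨r, hrS, rfl⟩ := hl
    have hb := hmem r hrS
    simp only [hblk, List.mem_append, List.mem_replicate, List.mem_singleton] at hr'l
    simp only [Set.mem_insert_iff, Set.mem_singleton_iff]
    rcases hr'l with h | h <;> omega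
  · intro i hi j hj hij
    rw [hOp] at hij
    refine goodblock_inj (k+1) (by omega) blk (fun t => (sigmaRot (k+1) (k+1)) ^ t)
      Fin.revPerm S hlenb hpartb hfullb hc
      (fun t ht => reuse_Binv (k+1) (by omega) t ht) hfixn hinjn i ?_ j ?_ hij <;>
    · rw [hlenS, ← Nat.factorial_succ]
      assumption
  · rw [hOp]
    exact goodblock_total (k+1) blk Fin.revPerm S hfullb htotn
end

section
/- (Holroyd–Ruskey–Williams) Let n ≥ 4. If S is a Hamilton sequence for the restricted rotator graph RR_{n−1}({n−2,n−1}), then recycle_n(S) is a Hamilton sequence for the restricted rotator graph RR_n({n−1,n}). -/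
open Equiv

lemma modcases (a b : ℕ) (hb : 0 < b) (h : a < 2*b) :
    (a < b ∧ a % b = a) ∨ (b ≤ a ∧ a % b = a - b) := by
  rcases lt_or_ge a b with h' | h'
  · exact Or.inl ⟨h', Nat.mod_eq_of_lt h'⟩
  · exact Or.inr ⟨h', by rw [Nat.mod_eq_sub_mod h', Nat.mod_eq_of_lt (by omega)]⟩

lemma sig_apply {m : ℕ} (r : ℕ) (hr : r ≤ m + 1) (x : Fin (m + 1)) :
    ((sigmaRot (m + 1) r) x : ℕ) =
      if (x : ℕ) + 1 < r then (x : ℕ) + 1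
      else if (x : ℕ) + 1 = r then 0 else (x : ℕ) := by
  have h : r - 1 < m + 1 := by omega
  rw [sigmaRot, dif_pos h]
  rcases lt_trichotomy (x : ℕ) (r - 1) with hc | hc | hc
  · rw [Fin.coe_cycleRange_of_lt (show x < ⟨r-1, h⟩ from hc)]
    split_ifs <;> omega
  · rw [show x = (⟨r-1, h⟩ : Fin (m+1)) from Fin.ext hc, Fin.cycleRange_self]
    simp only [Fin.val_zero]
    split_ifs <;> omega
  · rw [Fin.cycleRange_of_gt (show (⟨r-1, h⟩ : Fin (m+1)) < x from hc)]
    split_ifs <;> omega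

lemma sig_top_apply {m : ℕ} (x : Fin (m + 1)) :
    ((sigmaRot (m + 1) (m + 1)) x : ℕ) = ((x : ℕ) + 1) % (m + 1) := by
  rw [sig_apply (m+1) le_rfl]
  have := x.isLt
  split_ifs with h1 h2
  · rw [Nat.mod_eq_of_lt h1]
  · rw [h2, Nat.mod_self]
  · omega

lemma sig_top_pow {m : ℕ} (j : ℕ) (x : Fin (m + 1)) :
    (((sigmaRot (m + 1) (m + 1)) ^ j) x : ℕ) = ((x : ℕ) + j) % (m + 1) := by
  induction j generalizing x with
  | zero => simpa using (Nat.mod_eq_of_lt x.isLt).symm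
  | succ j ih =>
    rw [pow_succ', Perm.mul_apply, sig_top_apply, ih, Nat.mod_add_mod, Nat.add_assoc]

lemma tau_apply {m : ℕ} (x : Fin (m + 2)) (hx : (x : ℕ) < m + 1) :
    ((sigmaRot (m + 2) (m + 1)) x : ℕ) = ((x : ℕ) + 1) % (m + 1) := by
  rw [sig_apply (m+1) (by omega)]
  split_ifs with h1 h2
  · rw [Nat.mod_eq_of_lt h1]
  · rw [h2, Nat.mod_self]
  · omega

lemma tau_pow {m : ℕ} (j : ℕ) (x : Fin (m + 2)) (hx : (x : ℕ) < m + 1) :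
    (((sigmaRot (m + 2) (m + 1)) ^ j) x : ℕ) = ((x : ℕ) + j) % (m + 1) := by
  induction j generalizing x with
  | zero => simpa using (Nat.mod_eq_of_lt hx).symm
  | succ j ih =>
    have h1 : (((sigmaRot (m + 2) (m + 1)) ^ j) x : ℕ) = ((x : ℕ) + j) % (m + 1) := ih x hx
    have h2 : (((sigmaRot (m + 2) (m + 1)) ^ j) x : ℕ) < m + 1 := by
      rw [h1]; exact Nat.mod_lt _ (by omega)
    rw [pow_succ', Perm.mul_apply, tau_apply _ h2, h1, Nat.mod_add_mod, Nat.add_assoc]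

lemma tau_fix {m : ℕ} (j : ℕ) (x : Fin (m + 2)) (hx : (x : ℕ) = m + 1) :
    ((sigmaRot (m + 2) (m + 1)) ^ j) x = x := by
  induction j with
  | zero => rfl
  | succ j ih =>
    rw [pow_succ, Perm.mul_apply]
    have h1 : (sigmaRot (m + 2) (m + 1)) x = x := by
      apply Fin.ext
      rw [sig_apply (m+1) (by omega)]
      split_ifs <;> omega
    rw [h1, ih]

def embS (k : ℕ) : Fin (k + 1) ↪ Fin (k + 2) := ⟨Fin.succ, Fin.succ_injective _⟩

noncomputable def Phi (k : ℕ) : Perm (Fin (k + 1)) →* Perm (Fin (k + 2)) :=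
  Equiv.Perm.viaEmbeddingHom (embS k)

lemma Phi_succ {k : ℕ} (p : Perm (Fin (k + 1))) (y : Fin (k + 1)) :
    Phi k p y.succ = (p y).succ :=
  p.viaEmbedding_apply (embS k) y

lemma Phi_zero {k : ℕ} (p : Perm (Fin (k + 1))) : Phi k p 0 = 0 :=
  p.viaEmbedding_apply_of_notMem (embS k) 0 (by rintro ⟨y, hy⟩; exact Fin.succ_ne_zero y hy)

lemma Phi_inj {k : ℕ} : Function.Injective (Phi k) :=
  Equiv.Perm.viaEmbeddingHom_injective (embS k)

lemma block_eval (k r : ℕ) (hr1 : 1 ≤ r) (hr2 : r ≤ k + 1) :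
    sigmaRot (k+2) (k+2) * (sigmaRot (k+2) (k+2) *
      ((sigmaRot (k+2) (k+1)) ^ (r - 1) * (sigmaRot (k+2) (k+2)) ^ (k + 2 - r - 1)))
      = Phi k (sigmaRot (k+1) r) := by
  apply Equiv.ext; intro x
  simp only [Perm.mul_apply]
  set A := ((sigmaRot (k+2) (k+2)) ^ (k + 2 - r - 1)) x with hA
  have e1 : (A : ℕ) = ((x : ℕ) + (k + 2 - r - 1)) % (k + 2) := sig_top_pow _ x
  have hx2 := x.isLt
  have m1 := modcases ((x : ℕ) + (k + 2 - r - 1)) (k + 2) (by omega) (by omega)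
  by_cases hM : (A : ℕ) = k + 1
  · have efix : ((sigmaRot (k+2) (k+1)) ^ (r - 1)) A = A := tau_fix _ A hM
    rw [efix]
    have hxr : (x : ℕ) = r := by omega
    have e2 : ((sigmaRot (k+2) (k+2)) A : ℕ) = 0 := by
      rw [sig_top_apply, hM]
      exact Nat.mod_self (k + 2)
    have e3 : ((sigmaRot (k+2) (k+2)) ((sigmaRot (k+2) (k+2)) A) : ℕ) = 1 := by
      rw [sig_top_apply, e2]
      exact Nat.mod_eq_of_lt (by omega)
    have hxeq : x = Fin.succ ⟨r - 1, by omega⟩ := Fin.ext (by simp [Fin.val_succ]; omega)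
    rw [hxeq, Phi_succ]
    apply Fin.ext
    rw [e3, Fin.val_succ, sig_apply r hr2]
    simp only [Fin.val_mk]
    split_ifs <;> omega
  · have hMlt : (A : ℕ) < k + 1 := by have := A.isLt; omega
    set B := ((sigmaRot (k+2) (k+1)) ^ (r - 1)) A with hB
    have e2 : (B : ℕ) = ((A : ℕ) + (r - 1)) % (k + 1) := tau_pow _ A hMlt
    have m2 := modcases ((A : ℕ) + (r - 1)) (k + 1) (by omega) (by omega)
    set C := (sigmaRot (k+2) (k+2)) B with hC
    have e3 : (C : ℕ) = ((B : ℕ) + 1) % (k + 2) := sig_top_apply B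
    have m3 := modcases ((B : ℕ) + 1) (k + 2) (by omega) (by have := B.isLt; omega)
    have e4 : ((sigmaRot (k+2) (k+2)) C : ℕ) = ((C : ℕ) + 1) % (k + 2) := sig_top_apply C
    have m4 := modcases ((C : ℕ) + 1) (k + 2) (by omega) (by have := C.isLt; omega)
    apply Fin.ext
    rw [e4]
    rcases Fin.eq_zero_or_eq_succ x with rfl | ⟨y, rfl⟩
    · rw [Phi_zero]
      simp only [Fin.val_zero] at e1 m1 ⊢
      omega
    · rw [Phi_succ, Fin.val_succ, sig_apply r hr2]
      have hy := y.isLt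
      simp only [Fin.val_succ] at e1 m1 ⊢
      split_ifs <;> omega

def blL (k r : ℕ) : List ℕ :=
  (k+2) :: (k+2) :: (List.replicate (r-1) (k+1) ++ List.replicate (k+2-r-1) (k+2))

lemma rec_cons (k r : ℕ) (S : List ℕ) :
    recycleOp (k+2) (r :: S) = blL k r ++ recycleOp (k+2) S := rfl

lemma blL_length (k r : ℕ) (hk : 1 ≤ k) (h : r = k ∨ r = k+1) : (blL k r).length = k + 2 := by
  rcases h with rfl | rfl <;> simp [blL] <;> omega

lemma blL_prod (k r : ℕ) :
    ((blL k r).map (sigmaRot (k+2))).prod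
      = sigmaRot (k+2) (k+2) * (sigmaRot (k+2) (k+2) *
          ((sigmaRot (k+2) (k+1)) ^ (r-1) * (sigmaRot (k+2) (k+2)) ^ (k+2-r-1))) := by
  simp [blL, List.map_replicate, List.prod_replicate]

def prefL (k t : ℕ) : List ℕ := List.take t ((k+2) :: (k+2) :: List.replicate k (k+1))

lemma blL_take (k r t : ℕ) (hr : r = k ∨ r = k+1) (hk : 1 ≤ k) (ht : t ≤ k+1) :
    (blL k r).take t = prefL k t := by
  rcases t with _ | _ | s
  · rfl
  · rfl
  · have hsr : s ≤ r - 1 := by rcases hr with rfl | rfl <;> omega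
    simp only [blL, prefL, List.take_succ_cons]
    rw [List.take_append, List.take_replicate, List.take_replicate]
    have h3 : s - (List.replicate (r-1) (k+1)).length = 0 := by
      rw [List.length_replicate]; omega
    rw [h3, Nat.min_eq_left (by omega), Nat.min_eq_left (by omega)]
    simp
    omega

lemma pref_marker (k t : ℕ) (hk : 2 ≤ k) (ht : t ≤ k + 1) (x : Fin (k+2))
    (hx : (x : ℕ) = (k + 2 - t) % (k + 2)) :
    ((prefL k t).map (sigmaRot (k+2))).prod x = (⟨0, by omega⟩ : Fin (k+2)) := by
  rcases t with _ | _ | s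
  · have hx0 : (x : ℕ) = 0 := by rw [hx]; exact Nat.mod_self _
    simp only [prefL, List.take_zero, List.map_nil, List.prod_nil, Equiv.Perm.one_apply]
    exact Fin.ext hx0
  · have hx1 : (x : ℕ) = k + 1 := by rw [hx]; exact Nat.mod_eq_of_lt (by omega)
    simp only [prefL, List.take_succ_cons, List.take_zero, List.map_cons, List.map_nil,
      List.prod_cons, List.prod_nil, mul_one]
    apply Fin.ext
    rw [sig_top_apply, hx1]
    exact Nat.mod_self (k+2)
  · have hx' : (x : ℕ) = k - s := by rw [hx, Nat.mod_eq_of_lt (by omega)]; omega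
    have hpre : prefL k (s+2) = (k+2) :: (k+2) :: List.replicate s (k+1) := by
      simp only [prefL, List.take_succ_cons, List.take_replicate]
      rw [Nat.min_eq_left (by omega)]
    rw [hpre]
    simp only [List.map_cons, List.prod_cons, List.map_replicate, List.prod_replicate,
      Equiv.Perm.mul_apply]
    have e1 : (((sigmaRot (k+2) (k+1)) ^ s) x : ℕ) = k := by
      rw [tau_pow _ _ (by omega), hx', Nat.mod_eq_of_lt (by omega)]
      omega
    have e2 : ((sigmaRot (k+2) (k+2)) (((sigmaRot (k+2) (k+1)) ^ s) x) : ℕ) = k + 1 := by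
      rw [sig_top_apply, e1]
      exact Nat.mod_eq_of_lt (by omega)
    apply Fin.ext
    rw [sig_top_apply, e2]
    exact Nat.mod_self (k+2)

lemma rec_length (k : ℕ) (hk : 1 ≤ k) : ∀ (S : List ℕ), (∀ r ∈ S, r = k ∨ r = k+1) →
    (recycleOp (k+2) S).length = (k+2) * S.length := by
  intro S
  induction S with
  | nil => intro _; simp [recycleOp]
  | cons r S' ih =>
    intro hmem
    rw [rec_cons, List.length_append, blL_length k r hk (hmem r (List.mem_cons_self)),
      ih (fun a ha => hmem a (List.mem_cons_of_mem r ha)), List.length_cons]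
    ring

lemma rec_mem (k : ℕ) : ∀ (S : List ℕ), (∀ r ∈ S, r = k ∨ r = k+1) →
    ∀ a ∈ recycleOp (k+2) S, a = k+1 ∨ a = k+2 := by
  intro S
  induction S with
  | nil => intro _ a ha; simp [recycleOp] at ha
  | cons r S' ih =>
    intro hmem a ha
    rw [rec_cons, List.mem_append] at ha
    rcases ha with ha | ha
    · simp only [blL, List.mem_cons, List.mem_append, List.mem_replicate] at ha
      rcases ha with h | h | h | h <;> omega
    · exact ih (fun b hb => hmem b (List.mem_cons_of_mem r hb)) a ha

lemma pp_boundary (k : ℕ) (hk : 1 ≤ k) : ∀ (S : List ℕ), (∀ r ∈ S, r = k ∨ r = k+1) →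
    ∀ i ≤ S.length,
      partialProd (k+2) (recycleOp (k+2) S) ((k+2) * i)
        = Phi k (partialProd (k+1) S i) := by
  intro S
  induction S with
  | nil =>
    intro _ i hi
    have : i = 0 := by simpa using hi
    subst this
    simp [partialProd, recycleOp]
  | cons r S' ih =>
    intro hmem i hi
    cases i with
    | zero => simp [partialProd]
    | succ j =>
      have hr := hmem r (List.mem_cons_self)
      have hr1 : 1 ≤ r := by omega
      have hr2 : r ≤ k + 1 := by omega
      have hlen : (blL k r).length = k + 2 := blL_length k r hk hr
      have harith : (k+2) * (j+1) = (blL k r).length + (k+2) * j := by rw [hlen]; ring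
      have ht : (blL k r ++ recycleOp (k+2) S').take ((k+2) * (j+1))
          = blL k r ++ (recycleOp (k+2) S').take ((k+2) * j) := by
        rw [harith, List.take_append]
        congr 1
        · exact List.take_of_length_le (by omega)
        · congr 1
          omega
      rw [rec_cons]
      show ((((blL k r ++ recycleOp (k+2) S').take ((k+2)*(j+1))).map (sigmaRot (k+2))).prod) = _
      rw [ht, List.map_append, List.prod_append]
      have hih := ih (fun a ha => hmem a (List.mem_cons_of_mem r ha)) j (by simpa using hi)
      show (((blL k r).map (sigmaRot (k+2))).prod) * partialProd (k+2) (recycleOp (k+2) S') ((k+2)*j) = _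
      rw [hih, blL_prod, block_eval k r hr1 hr2, ← map_mul]
      congr 1

lemma pp_mid (k : ℕ) (hk : 1 ≤ k) : ∀ (S : List ℕ), (∀ r ∈ S, r = k ∨ r = k+1) →
    ∀ i t, i < S.length → t ≤ k+1 →
      partialProd (k+2) (recycleOp (k+2) S) ((k+2) * i + t)
        = Phi k (partialProd (k+1) S i) * ((prefL k t).map (sigmaRot (k+2))).prod := by
  intro S
  induction S with
  | nil => intro _ i t hi _; simp at hi
  | cons r S' ih =>
    intro hmem i t hi htle
    have hr := hmem r (List.mem_cons_self)
    have hlen : (blL k r).length = k + 2 := blL_length k r hk hr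
    cases i with
    | zero =>
      have ht : (blL k r ++ recycleOp (k+2) S').take t = prefL k t := by
        rw [List.take_append]
        have h0 : t - (blL k r).length = 0 := by omega
        rw [h0, List.take_zero, List.append_nil, blL_take k r t hr hk htle]
      rw [rec_cons]
      show ((((blL k r ++ recycleOp (k+2) S').take ((k+2)*0 + t)).map (sigmaRot (k+2))).prod) = _
      rw [Nat.mul_zero, Nat.zero_add, ht]
      show _ = Phi k (partialProd (k+1) (r :: S') 0) * _
      rw [show partialProd (k+1) (r :: S') 0 = 1 from rfl, map_one, one_mul]
    | succ j =>
      have harith : (k+2) * (j+1) + t = (blL k r).length + ((k+2) * j + t) := by rw [hlen]; ring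
      have ht : (blL k r ++ recycleOp (k+2) S').take ((k+2) * (j+1) + t)
          = blL k r ++ (recycleOp (k+2) S').take ((k+2) * j + t) := by
        rw [harith, List.take_append]
        congr 1
        · exact List.take_of_length_le (by omega)
        · congr 1
          omega
      rw [rec_cons]
      show ((((blL k r ++ recycleOp (k+2) S').take ((k+2)*(j+1) + t)).map (sigmaRot (k+2))).prod) = _
      rw [ht, List.map_append, List.prod_append]
      have hih := ih (fun a ha => hmem a (List.mem_cons_of_mem r ha)) j t (by simpa using hi) htle
      show (((blL k r).map (sigmaRot (k+2))).prod) * partialProd (k+2) (recycleOp (k+2) S') ((k+2)*j + t) = _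
      rw [hih, blL_prod, block_eval k r (by omega) (by omega), ← mul_assoc, ← map_mul]
      congr 2


/-- Holroyd–Ruskey–Williams. Let `n ≥ 4`. If `S` is a Hamilton sequence
for `RR_{n-1}({n-2,n-1})`, then `recycle_n(S)` is a Hamilton sequence for `RR_n({n-1,n})`. -/
theorem stmt19 (n : ℕ) (hn : 4 ≤ n) (S : List ℕ)
    (hS : IsHamiltonSeq (n - 1) {n - 2, n - 1} S) :
    IsHamiltonSeq n {n - 1, n} (recycleOp n S) := by

  obtain ⟨k, rfl⟩ : ∃ k, n = k + 2 := ⟨n - 2, by omega⟩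
  have hk : 2 ≤ k := by omega
  obtain ⟨hlen, hmem, hinj, hprod⟩ := hS
  have hlen' : S.length = Nat.factorial (k+1) := hlen
  have hprod' : partialProd (k+1) S S.length = 1 := hprod
  have hinj' : ∀ i < Nat.factorial (k+1), ∀ j < Nat.factorial (k+1),
      partialProd (k+1) S i = partialProd (k+1) S j → i = j := hinj
  have hmem' : ∀ r ∈ S, r = k ∨ r = k + 1 := by
    intro r hr
    have h := hmem r hr
    simp only [Set.mem_insert_iff, Set.mem_singleton_iff] at h
    omega
  have hL : (recycleOp (k+2) S).length = (k+2) * S.length := rec_length k (by omega) S hmem'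
  have hfac : Nat.factorial (k+2) = (k+2) * Nat.factorial (k+1) := Nat.factorial_succ (k+1)
  refine ⟨?_, ?_, ?_, ?_⟩
  · rw [hL, hlen', hfac]
  · intro r hr
    rcases rec_mem k S hmem' r hr with h | h <;>
      simp only [Set.mem_insert_iff, Set.mem_singleton_iff] <;> omega
  · intro i hi j hj heq
    have hiL : i < (k+2) * Nat.factorial (k+1) := by rw [← hfac]; exact hi
    have hjL : j < (k+2) * Nat.factorial (k+1) := by rw [← hfac]; exact hj
    obtain ⟨qi, ti, hdi, hti⟩ : ∃ q t, i = (k+2)*q + t ∧ t < k+2 :=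
      ⟨i/(k+2), i%(k+2), (Nat.div_add_mod i (k+2)).symm, Nat.mod_lt _ (by omega)⟩
    obtain ⟨qj, tj, hdj, htj⟩ : ∃ q t, j = (k+2)*q + t ∧ t < k+2 :=
      ⟨j/(k+2), j%(k+2), (Nat.div_add_mod j (k+2)).symm, Nat.mod_lt _ (by omega)⟩
    have hqi : qi < S.length := by
      rw [hlen']
      by_contra hcon
      push_neg at hcon
      have := Nat.mul_le_mul_left (k+2) hcon
      omega
    have hqj : qj < S.length := by
      rw [hlen']
      by_contra hcon
      push_neg at hcon
      have := Nat.mul_le_mul_left (k+2) hcon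
      omega
    rw [hdi, hdj, pp_mid k (by omega) S hmem' qi ti hqi (by omega),
        pp_mid k (by omega) S hmem' qj tj hqj (by omega)] at heq
    have h1 : (Phi k (partialProd (k+1) S qi) * ((prefL k ti).map (sigmaRot (k+2))).prod)
        ⟨(k+2-ti) % (k+2), Nat.mod_lt _ (by omega)⟩ = (⟨0, by omega⟩ : Fin (k+2)) := by
      rw [Equiv.Perm.mul_apply, pref_marker k ti hk (by omega) _ rfl]
      exact Phi_zero _
    have h2 : (Phi k (partialProd (k+1) S qj) * ((prefL k tj).map (sigmaRot (k+2))).prod)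
        ⟨(k+2-tj) % (k+2), Nat.mod_lt _ (by omega)⟩ = (⟨0, by omega⟩ : Fin (k+2)) := by
      rw [Equiv.Perm.mul_apply, pref_marker k tj hk (by omega) _ rfl]
      exact Phi_zero _
    rw [heq] at h1
    have hteq : ti = tj := by
      have hxeq := (Phi k (partialProd (k+1) S qj) *
        ((prefL k tj).map (sigmaRot (k+2))).prod).injective (h1.trans h2.symm)
      have hv := congrArg Fin.val hxeq
      simp only at hv
      have mt := modcases (k+2-ti) (k+2) (by omega) (by omega)
      have mu := modcases (k+2-tj) (k+2) (by omega) (by omega)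
      omega
    subst hteq
    have hcanc := mul_right_cancel heq
    have hq : partialProd (k+1) S qi = partialProd (k+1) S qj := Phi_inj hcanc
    have hqq : qi = qj := hinj' qi (hlen' ▸ hqi) qj (hlen' ▸ hqj) hq
    subst hqq
    omega
  · rw [hL]
    rw [pp_boundary k (by omega) S hmem' S.length le_rfl, hprod', map_one]
end
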